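/- With d(α) the degree defined recursively (d of the identity of S_1 is 2; d([α,0]) = d(α)+1; d([α,j]) = d(α)+1 if j is in the cycle of α containing 1; d([α,j]) = d(α)-1 otherwise), a permutation α ∈ S_n attains the maximal degree d(α) = n+1 if and only if α satisfies condition (*): every cycle of its functional graph has exactly one arrow with source smaller than target, and the cycles are pairwise non-crossing. -/

import Mathlib

/-- Two subsets of `{0, ..., m-1}` cross if there are `a < b < c < d` with
`a, c` in the first and `b, d` in the second. -/
def Crossing {m : ℕ} (A B : Set (Fin m)) : Prop :=
  ∃ a b c d : Fin m, a < b ∧ b < c ∧ c < d ∧ a ∈ A ∧ c ∈ A ∧ b ∈ B ∧ d ∈ B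

/-- Condition (*): every (nontrivial) cycle of the functional graph of `α`
(arrows `i → α i`) has exactly one ascent arrow (source smaller than target), and the
orbits of `α` (cycles, counting fixed points) are pairwise non-crossing. -/
def SatisfiesStar {m : ℕ} (α : Equiv.Perm (Fin m)) : Prop :=
  (∀ c ∈ α.cycleFactorsFinset, (c.support.filter fun i => i < c i).card = 1) ∧
  ∀ x y : Fin m, ¬ α.SameCycle x y →
    ¬ Crossing {z | α.SameCycle x z} {z | α.SameCycle y z}

/-- Number of cycles of `α`, counting fixed points as 1-cycles. -/
def cycleCount {m : ℕ} (α : Equiv.Perm (Fin m)) : ℕ :=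
  Multiset.card α.cycleType + (Finset.univ.filter fun x => α x = x).card

/-- Extension of `α ∈ S_m` to `S_{m+1}` fixing the new top element `Fin.last m`. -/
def liftPerm {m : ℕ} (α : Equiv.Perm (Fin m)) : Equiv.Perm (Fin (m + 1)) :=
  finSuccEquivLast.symm.permCongr α.optionCongr

/-- The "Case 0" construction `[α, 0]`: extend the chain of `Q̂_α` by a new arrow at the
top (here `0` plays the role of the paper's distinguished element `1`, and
`Fin.last m` the role of the new element `n+1`): the resulting permutation sends
`0 ↦ last`, `last ↦ α 0`, and agrees with `α` elsewhere. -/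
def chainExt {m : ℕ} (α : Equiv.Perm (Fin m)) : Equiv.Perm (Fin (m + 1)) :=
  liftPerm α * Equiv.swap 0 (Fin.last m)

/-- The cut-and-reconnect construction `[α, j]`: `insPerm α none = [α, 0]` (Case 0),
and for a target `j` of `Q̂_α`, `insPerm α (some j)` cuts the arrow `i → j` of `Q̂_α`
and reconnects via new arrows (virtual vertex) `→ j` and `i →` (new top vertex). -/
def insPerm {m : ℕ} (α : Equiv.Perm (Fin m)) : Option (Fin m) → Equiv.Perm (Fin (m + 1))
  | none => chainExt α
  | some j => Equiv.swap (Fin.last m) j.castSucc * chainExt α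

theorem Equiv.Perm.apply_inv_self {β : Type*} (f : Equiv.Perm β) (x : β) : f (f⁻¹ x) = x :=
  Equiv.apply_symm_apply f x

theorem Equiv.Perm.inv_apply_self {β : Type*} (f : Equiv.Perm β) (x : β) : f⁻¹ (f x) = x :=
  Equiv.symm_apply_apply f x

open Equiv Equiv.Perm Fin

namespace StarProof

variable {k : ℕ}

lemma sc_step (f : Perm (Fin k)) (x : Fin k) : f.SameCycle x (f x) :=
  ⟨1, by simp⟩

lemma sc_nat_pow {f : Perm (Fin k)} {x y : Fin k} (h : f.SameCycle x y) :
    ∃ i : ℕ, (f ^ i) x = y := by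
  obtain ⟨i, _, h⟩ := h.exists_pow_eq'
  exact ⟨i, h⟩

/-- Induction principle: any step-closed transitive reflexive relation contains SameCycle. -/
lemma sc_ind (f : Perm (Fin k)) (r : Fin k → Fin k → Prop)
    (hrefl : ∀ x, r x x) (htrans : ∀ x y z, r x y → r y z → r x z)
    (hstep : ∀ x, r x (f x)) {x y : Fin k} (h : f.SameCycle x y) : r x y := by
  have key : ∀ (i : ℕ) (x : Fin k), r x ((f ^ i) x) := by
    intro i
    induction i with
    | zero => simpa using hrefl
    | succ n ih =>
      intro x
      have hx : (f ^ (n + 1)) x = (f ^ n) (f x) := by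
        rw [pow_succ, Equiv.Perm.mul_apply]
      rw [hx]
      exact htrans _ _ _ (hstep x) (ih (f x))
  obtain ⟨i, rfl⟩ := sc_nat_pow h
  exact key i x

/-- Walk lemma: if τ agrees with σ on the σ-orbit of x away from S, and the σ-orbit
of x meets S, then the τ-orbit of x meets S. -/
lemma sc_walk (σ τ : Perm (Fin k)) (S : Set (Fin k)) {x y : Fin k}
    (h : σ.SameCycle x y) (hy : y ∈ S)
    (hag : ∀ z, σ.SameCycle x z → z ∉ S → τ z = σ z) :
    ∃ s ∈ S, τ.SameCycle x s := by
  have key : ∀ (i : ℕ) (x : Fin k), (σ ^ i) x ∈ S →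
      (∀ z, σ.SameCycle x z → z ∉ S → τ z = σ z) → ∃ s ∈ S, τ.SameCycle x s := by
    intro i
    induction i with
    | zero => intro x hx _; exact ⟨x, by simpa using hx, Equiv.Perm.SameCycle.refl _ _⟩
    | succ n ih =>
      intro x hy hag
      by_cases hx : x ∈ S
      · exact ⟨x, hx, Equiv.Perm.SameCycle.refl _ _⟩
      · have hτ : τ x = σ x := hag x (Equiv.Perm.SameCycle.refl _ _) hx
        have hy' : (σ ^ n) (σ x) ∈ S := by
          have h2 : (σ ^ (n + 1)) x = (σ ^ n) (σ x) := by rw [pow_succ, Equiv.Perm.mul_apply]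
          rwa [h2] at hy
        have hag' : ∀ z, σ.SameCycle (σ x) z → z ∉ S → τ z = σ z := fun z hz hzS =>
          hag z ((sc_step σ x).trans hz) hzS
        obtain ⟨s, hs, hsc⟩ := ih (σ x) hy' hag'
        have hstep : τ.SameCycle x (σ x) := by rw [← hτ]; exact sc_step τ x
        exact ⟨s, hs, hstep.trans hsc⟩
  obtain ⟨i, rfl⟩ := sc_nat_pow h
  exact key i x hy hag

lemma sc_fixed {f : Perm (Fin k)} {x y : Fin k} (hx : f x = x) (h : f.SameCycle x y) :
    y = x := by
  have := sc_ind f (fun a b => a = x → b = x) (fun _ h => h)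
    (fun a b c hab hbc h => hbc (hab h))
    (fun a ha => by rw [ha, hx]) h
  exact this rfl

lemma sc_set_eq {f : Perm (Fin k)} {x y : Fin k} (h : f.SameCycle x y) :
    {z | f.SameCycle x z} = {z | f.SameCycle y z} := by
  ext z; exact ⟨fun hz => h.symm.trans hz, fun hz => h.trans hz⟩


/-- Pointwise reformulation of the "exactly one ascent per cycle" condition. -/
def StarAsc {k : ℕ} (α : Perm (Fin k)) : Prop :=
  ∀ x y : Fin k, α.SameCycle x y → x < α x → y < α y → x = y

def StarCross {k : ℕ} (α : Perm (Fin k)) : Prop :=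
  ∀ x y : Fin k, ¬ α.SameCycle x y →
    ¬ Crossing {z | α.SameCycle x z} {z | α.SameCycle y z}

def Star' {k : ℕ} (α : Perm (Fin k)) : Prop := StarAsc α ∧ StarCross α

lemma satisfiesStar_iff {k : ℕ} (α : Perm (Fin k)) : SatisfiesStar α ↔ Star' α := by
  constructor
  · rintro ⟨h1, h2⟩
    refine ⟨?_, h2⟩
    intro x y hxy hx hy
    by_contra hne
    have hxs : x ∈ α.support := Equiv.Perm.mem_support.2 (ne_of_gt hx)
    have hc : α.cycleOf x ∈ α.cycleFactorsFinset :=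
      Equiv.Perm.cycleOf_mem_cycleFactorsFinset_iff.2 hxs
    have hcard := h1 _ hc
    have hxm : x ∈ (α.cycleOf x).support.filter fun i => i < (α.cycleOf x) i := by
      refine Finset.mem_filter.2 ⟨?_, ?_⟩
      · exact Equiv.Perm.mem_support_cycleOf_iff.2 ⟨Equiv.Perm.SameCycle.refl _ _, hxs⟩
      · rwa [Equiv.Perm.cycleOf_apply_self]
    have hym : y ∈ (α.cycleOf x).support.filter fun i => i < (α.cycleOf x) i := by
      refine Finset.mem_filter.2 ⟨?_, ?_⟩
      · exact Equiv.Perm.mem_support_cycleOf_iff.2 ⟨hxy, hxs⟩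
      · rwa [Equiv.Perm.SameCycle.cycleOf_apply hxy]
    have : 2 ≤ ((α.cycleOf x).support.filter fun i => i < (α.cycleOf x) i).card := by
      have := Finset.one_lt_card.2 ⟨x, hxm, y, hym, hne⟩
      omega
    omega
  · rintro ⟨h1, h2⟩
    refine ⟨?_, h2⟩
    intro c hc
    obtain ⟨hcyc, hsupp⟩ := Equiv.Perm.mem_cycleFactorsFinset_iff.1 hc
    have hne : c.support.Nonempty := by
      rw [Finset.nonempty_iff_ne_empty, Ne, Equiv.Perm.support_eq_empty_iff]
      exact hcyc.ne_one
    set μ := c.support.min' hne with hμdef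
    have hμs : μ ∈ c.support := c.support.min'_mem hne
    have hcx : ∀ w ∈ c.support, c w = α w := hsupp
    have hμasc : μ < c μ := by
      have h1' : c μ ∈ c.support := Equiv.Perm.apply_mem_support.2 hμs
      have h2' : c μ ≠ μ := Equiv.Perm.mem_support.1 hμs
      exact lt_of_le_of_ne (c.support.min'_le _ h1') (Ne.symm h2')
    rw [Finset.card_eq_one]
    refine ⟨μ, ?_⟩
    ext w
    simp only [Finset.mem_filter, Finset.mem_singleton]
    constructor
    · rintro ⟨hws, hwlt⟩
      -- w and μ are both ascents of α in the same cycle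
      have hcw : c = α.cycleOf w := Equiv.Perm.cycle_is_cycleOf hws hc
      have hμw : α.SameCycle w μ := by
        have := hμs
        rw [hcw] at this
        exact (Equiv.Perm.mem_support_cycleOf_iff.1 this).1
      have haw : w < α w := by rwa [hcx w hws] at hwlt
      have haμ : μ < α μ := by rwa [hcx μ hμs] at hμasc
      exact h1 w μ hμw haw haμ
    · rintro rfl
      exact ⟨hμs, hμasc⟩

lemma star'_one : Star' (1 : Perm (Fin 1)) := by
  constructor
  · intro x y _ hx _
    simp at hx
  · intro x y hxy
    have hxyeq : x = y := Subsingleton.elim x y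
    subst hxyeq
    exact absurd (Equiv.Perm.SameCycle.refl _ _) hxy

section Pointwise

variable {n : ℕ} (α : Perm (Fin (n + 1)))

lemma liftPerm_castSucc (x : Fin (n + 1)) :
    liftPerm α x.castSucc = (α x).castSucc := by
  simp [liftPerm, Equiv.permCongr_apply]

lemma liftPerm_last : liftPerm α (Fin.last (n + 1)) = Fin.last (n + 1) := by
  simp [liftPerm, Equiv.permCongr_apply]

lemma cs_ne_last (x : Fin (n + 1)) : x.castSucc ≠ Fin.last (n + 1) :=
  ne_of_lt (Fin.castSucc_lt_last x)

lemma cs_zero : (0 : Fin (n + 1)).castSucc = (0 : Fin (n + 2)) := Fin.castSucc_zero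

lemma cs_ne_zero {x : Fin (n + 1)} (hx : x ≠ 0) : x.castSucc ≠ (0 : Fin (n + 2)) := by
  rw [← cs_zero]
  exact fun h => hx (Fin.castSucc_injective _ h)

lemma last_ne_zero' : (Fin.last (n + 1) : Fin (n + 2)) ≠ 0 := by
  simp [Fin.ext_iff]

lemma chainExt_zero : chainExt α 0 = Fin.last (n + 1) := by
  rw [chainExt, Equiv.Perm.mul_apply, Equiv.swap_apply_left, liftPerm_last]

lemma chainExt_last : chainExt α (Fin.last (n + 1)) = (α 0).castSucc := by
  rw [chainExt, Equiv.Perm.mul_apply, Equiv.swap_apply_right, ← cs_zero, liftPerm_castSucc]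

lemma chainExt_castSucc {x : Fin (n + 1)} (hx : x ≠ 0) :
    chainExt α x.castSucc = (α x).castSucc := by
  rw [chainExt, Equiv.Perm.mul_apply, Equiv.swap_apply_of_ne_of_ne (cs_ne_zero hx) (cs_ne_last x),
    liftPerm_castSucc]

lemma insPerm_some_zero (j : Fin (n + 1)) : insPerm α (some j) 0 = j.castSucc := by
  rw [insPerm, Equiv.Perm.mul_apply, chainExt_zero, Equiv.swap_apply_left]

lemma insPerm_some_castSucc {x j : Fin (n + 1)} (hx : x ≠ 0) (hax : α x ≠ j) :
    insPerm α (some j) x.castSucc = (α x).castSucc := by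
  rw [insPerm, Equiv.Perm.mul_apply, chainExt_castSucc α hx,
    Equiv.swap_apply_of_ne_of_ne (cs_ne_last _) (by
      exact fun h => hax (Fin.castSucc_injective _ h))]

lemma insPerm_some_castSucc_eq {x j : Fin (n + 1)} (hx : x ≠ 0) (hax : α x = j) :
    insPerm α (some j) x.castSucc = Fin.last (n + 1) := by
  rw [insPerm, Equiv.Perm.mul_apply, chainExt_castSucc α hx, hax, Equiv.swap_apply_right]

lemma insPerm_some_last {j : Fin (n + 1)} (h : α 0 ≠ j) :
    insPerm α (some j) (Fin.last (n + 1)) = (α 0).castSucc := by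
  rw [insPerm, Equiv.Perm.mul_apply, chainExt_last,
    Equiv.swap_apply_of_ne_of_ne (cs_ne_last _) (by
      exact fun hc => h (Fin.castSucc_injective _ hc))]

lemma insPerm_some_last_eq {j : Fin (n + 1)} (h : α 0 = j) :
    insPerm α (some j) (Fin.last (n + 1)) = Fin.last (n + 1) := by
  rw [insPerm, Equiv.Perm.mul_apply, chainExt_last, h, Equiv.swap_apply_right]

/-- The degenerate case `j = α 0` just adds a fixed point on top. -/
lemma insPerm_some_apply_eq : insPerm α (some (α 0)) = liftPerm α := by
  apply Equiv.ext
  intro z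
  induction z using Fin.lastCases with
  | last => rw [insPerm_some_last_eq α rfl, liftPerm_last]
  | cast x =>
    rw [liftPerm_castSucc]
    by_cases hx : x = 0
    · subst hx
      rw [cs_zero, insPerm_some_zero]
    · exact insPerm_some_castSucc α hx (fun h => hx (α.injective h))

/-- SameCycle facts for `liftPerm`. -/
lemma sc_lift_iff {x y : Fin (n + 1)} :
    (liftPerm α).SameCycle x.castSucc y.castSucc ↔ α.SameCycle x y := by
  constructor
  · intro h
    have := sc_ind (liftPerm α)
      (fun u v => (∃ a b, u = a.castSucc ∧ v = b.castSucc ∧ α.SameCycle a b) ∨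
        (u = Fin.last (n + 1) ∧ v = Fin.last (n + 1)))
      (by
        intro u
        induction u using Fin.lastCases with
        | last => exact Or.inr ⟨rfl, rfl⟩
        | cast a => exact Or.inl ⟨a, a, rfl, rfl, Equiv.Perm.SameCycle.refl _ _⟩)
      (by
        rintro u v w (⟨a, b, rfl, rfl, hab⟩ | ⟨rfl, rfl⟩) (⟨b', c, hbc, rfl, hbc'⟩ | ⟨hbc, rfl⟩)
        · have : b = b' := Fin.castSucc_injective _ hbc
          subst this
          exact Or.inl ⟨a, c, rfl, rfl, hab.trans hbc'⟩
        · exact absurd hbc (cs_ne_last _)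
        · exact absurd hbc.symm (cs_ne_last _)
        · exact Or.inr ⟨rfl, rfl⟩)
      (by
        intro u
        induction u using Fin.lastCases with
        | last => exact Or.inr ⟨rfl, liftPerm_last α⟩
        | cast a => exact Or.inl ⟨a, α a, rfl, liftPerm_castSucc α a, sc_step α a⟩)
      h
    rcases this with ⟨a, b, ha, hb, hab⟩ | ⟨ha, _⟩
    · rwa [(Fin.castSucc_injective _ ha : x = a), (Fin.castSucc_injective _ hb : y = b)]
    · exact absurd ha (cs_ne_last _)
  · intro h
    exact sc_ind α (fun a b => (liftPerm α).SameCycle a.castSucc b.castSucc)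
      (fun a => Equiv.Perm.SameCycle.refl _ _)
      (fun a b c hab hbc => hab.trans hbc)
      (fun a => by
        show (liftPerm α).SameCycle a.castSucc (α a).castSucc
        rw [← liftPerm_castSucc α a]
        exact sc_step (liftPerm α) a.castSucc) h

lemma sc_lift_last {z : Fin (n + 2)} (h : (liftPerm α).SameCycle (Fin.last (n + 1)) z) :
    z = Fin.last (n + 1) :=
  sc_fixed (liftPerm_last α) h

end Pointwise

section ChainFacts

variable {n : ℕ} (α : Perm (Fin (n + 1)))

lemma chain_agree_lift {z : Fin (n + 2)} (h0 : z ≠ 0) (hl : z ≠ Fin.last (n + 1)) :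
    chainExt α z = liftPerm α z := by
  induction z using Fin.lastCases with
  | last => exact absurd rfl hl
  | cast a =>
    have ha : a ≠ 0 := fun h => h0 (by rw [h, cs_zero])
    rw [chainExt_castSucc α ha, liftPerm_castSucc]

lemma sc_lift_ne_last {u : Fin (n + 1)} {z : Fin (n + 2)}
    (h : (liftPerm α).SameCycle u.castSucc z) : z ≠ Fin.last (n + 1) := by
  intro hz
  subst hz
  exact cs_ne_last u (sc_fixed (liftPerm_last α) h.symm)

/-- Everything in the `α`-orbit of `0` is chain-connected to `0`. -/
lemma chain_to_zero {w : Fin (n + 1)} (h : α.SameCycle 0 w) :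
    (chainExt α).SameCycle w.castSucc ((0 : Fin (n + 1)).castSucc) := by
  have hl : (liftPerm α).SameCycle w.castSucc ((0 : Fin (n + 1)).castSucc) :=
    (sc_lift_iff α).2 h.symm
  obtain ⟨s, hs, hsc⟩ := sc_walk (liftPerm α) (chainExt α)
    {(0 : Fin (n + 1)).castSucc} hl rfl (by
      intro z hz hzS
      have hzl : z ≠ Fin.last (n + 1) := sc_lift_ne_last α hz
      have hz0 : z ≠ 0 := by
        intro h0
        exact hzS (by rw [h0, cs_zero]; rfl)
      exact chain_agree_lift α hz0 hzl)
  rw [Set.mem_singleton_iff] at hs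
  rwa [hs] at hsc

lemma chain_zero_last : (chainExt α).SameCycle 0 (Fin.last (n + 1)) := by
  have := sc_step (chainExt α) 0
  rwa [chainExt_zero] at this

/-- Classification of chain same-cycle pairs. -/
lemma chain_classify {u z : Fin (n + 2)} (h : (chainExt α).SameCycle u z) :
    ((u = Fin.last (n + 1) ∨ ∃ a, u = a.castSucc ∧ α.SameCycle 0 a) ∧
     (z = Fin.last (n + 1) ∨ ∃ b, z = b.castSucc ∧ α.SameCycle 0 b)) ∨
    (∃ a b, u = a.castSucc ∧ z = b.castSucc ∧ ¬ α.SameCycle 0 a ∧ α.SameCycle a b) := by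
  refine sc_ind (chainExt α) (fun u z =>
    ((u = Fin.last (n + 1) ∨ ∃ a, u = a.castSucc ∧ α.SameCycle 0 a) ∧
     (z = Fin.last (n + 1) ∨ ∃ b, z = b.castSucc ∧ α.SameCycle 0 b)) ∨
    (∃ a b, u = a.castSucc ∧ z = b.castSucc ∧ ¬ α.SameCycle 0 a ∧ α.SameCycle a b)) ?_ ?_ ?_ h
  · intro u
    induction u using Fin.lastCases with
    | last => exact Or.inl ⟨Or.inl rfl, Or.inl rfl⟩
    | cast a =>
      by_cases ha : α.SameCycle 0 a
      · exact Or.inl ⟨Or.inr ⟨a, rfl, ha⟩, Or.inr ⟨a, rfl, ha⟩⟩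
      · exact Or.inr ⟨a, a, rfl, rfl, ha, Equiv.Perm.SameCycle.refl _ _⟩
  · rintro u v w (⟨hu, hv⟩ | ⟨a, b, rfl, rfl, ha, hab⟩) h2
    · rcases h2 with ⟨hv', hw⟩ | ⟨a, b, rfl, rfl, ha', hab⟩
      · exact Or.inl ⟨hu, hw⟩
      · rcases hv with hv | ⟨b', hb', hvb'⟩
        · exact absurd hv (cs_ne_last a)
        · exact absurd hvb' (by rwa [Fin.castSucc_injective _ hb'] at ha')
    · rcases h2 with ⟨hv', hw⟩ | ⟨a', b', hb', rfl, ha', hab'⟩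
      · rcases hv' with hv' | ⟨b', hb', hvb'⟩
        · exact absurd hv' (cs_ne_last b)
        · have hbb : b = b' := Fin.castSucc_injective _ hb'
          subst hbb
          exact absurd (hvb'.trans hab.symm) ha
      · have : b = a' := Fin.castSucc_injective _ hb'
        subst this
        exact Or.inr ⟨a, b', rfl, rfl, ha, hab.trans hab'⟩
  · intro u
    induction u using Fin.lastCases with
    | last =>
      rw [chainExt_last]
      exact Or.inl ⟨Or.inl rfl, Or.inr ⟨α 0, rfl, sc_step α 0⟩⟩
    | cast a =>
      by_cases ha : a = 0
      · subst ha
        rw [cs_zero, chainExt_zero]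
        exact Or.inl ⟨Or.inr ⟨0, cs_zero.symm, Equiv.Perm.SameCycle.refl _ _⟩, Or.inl rfl⟩
      · rw [chainExt_castSucc α ha]
        by_cases hsc : α.SameCycle 0 a
        · exact Or.inl ⟨Or.inr ⟨a, rfl, hsc⟩, Or.inr ⟨α a, rfl, hsc.trans (sc_step α a)⟩⟩
        · exact Or.inr ⟨a, α a, rfl, rfl, hsc, sc_step α a⟩

lemma ce1 {x y : Fin (n + 1)} :
    (chainExt α).SameCycle x.castSucc y.castSucc ↔ α.SameCycle x y := by
  constructor
  · intro h
    rcases chain_classify α h with ⟨hu, hv⟩ | ⟨a, b, ha, hb, _, hab⟩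
    · rcases hu with hu | ⟨a, ha, h0a⟩
      · exact absurd hu (cs_ne_last x)
      · rcases hv with hv | ⟨b, hb, h0b⟩
        · exact absurd hv (cs_ne_last y)
        · rw [Fin.castSucc_injective _ ha, Fin.castSucc_injective _ hb]
          exact h0a.symm.trans h0b
    · rw [Fin.castSucc_injective _ ha, Fin.castSucc_injective _ hb]
      exact hab
  · intro h
    by_cases h0 : α.SameCycle 0 x
    · exact (chain_to_zero α h0).trans (chain_to_zero α (h0.trans h)).symm
    · obtain ⟨s, hs, hsc⟩ := sc_walk (liftPerm α) (chainExt α) {y.castSucc}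
        ((sc_lift_iff α).2 h) rfl (by
          intro z hz hzS
          have hzl : z ≠ Fin.last (n + 1) := sc_lift_ne_last α hz
          have hz0 : z ≠ 0 := by
            intro hc
            subst hc
            rw [← cs_zero] at hz
            exact h0 ((sc_lift_iff α).1 hz).symm
          exact chain_agree_lift α hz0 hzl)
      rw [Set.mem_singleton_iff] at hs
      rwa [hs] at hsc

lemma ce2 {x : Fin (n + 1)} :
    (chainExt α).SameCycle x.castSucc (Fin.last (n + 1)) ↔ α.SameCycle 0 x := by
  constructor
  · intro h
    rcases chain_classify α h with ⟨hu, _⟩ | ⟨a, b, _, hb, _, _⟩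
    · rcases hu with hu | ⟨a, ha, h0a⟩
      · exact absurd hu (cs_ne_last x)
      · rwa [Fin.castSucc_injective _ ha]
    · exact absurd hb.symm (cs_ne_last b)
  · intro h
    have h1 := chain_to_zero α h
    have h2 := chain_zero_last α
    rw [← cs_zero] at h2
    exact h1.trans h2

lemma chain_last_classify {z : Fin (n + 2)} (h : (chainExt α).SameCycle (Fin.last (n + 1)) z) :
    z = Fin.last (n + 1) ∨ ∃ b, z = b.castSucc ∧ α.SameCycle 0 b := by
  rcases chain_classify α h with ⟨_, hv⟩ | ⟨a, b, ha, _, _, _⟩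
  · exact hv
  · exact absurd ha.symm (cs_ne_last a)

end ChainFacts

section OrderFacts

variable {n : ℕ} {α : Perm (Fin (n + 1))}

/-- In a star permutation, every non-minimal element of the orbit of 0 descends. -/
lemma d1 (hsA : StarAsc α) {y : Fin (n + 1)} (hy : α.SameCycle 0 y) (hy0 : y ≠ 0) :
    α y < y := by
  have h00 : α 0 ≠ 0 := fun h => hy0 (sc_fixed h hy)
  have hyy : α y ≠ y := fun h => hy0 (sc_fixed h hy.symm).symm
  by_contra hlt
  have : y < α y := lt_of_le_of_ne (not_lt.1 hlt) (Ne.symm hyy)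
  exact hy0 (hsA 0 y hy (Fin.pos_iff_ne_zero.2 h00) this).symm

/-- `α 0` is the maximum of the orbit of `0`. -/
lemma e1 (hsA : StarAsc α) {y : Fin (n + 1)} (hy : α.SameCycle 0 y) : y ≤ α 0 := by
  by_cases h00 : α 0 = 0
  · rw [sc_fixed h00 hy]
    exact Fin.zero_le _
  classical
  set F := Finset.univ.filter (fun w => α.SameCycle 0 w) with hF
  have hmemF : ∀ w, w ∈ F ↔ α.SameCycle 0 w := fun w => by simp [hF]
  have hFne : F.Nonempty := ⟨0, (hmemF 0).2 (Equiv.Perm.SameCycle.refl _ _)⟩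
  set M := F.max' hFne with hM
  have hMF : α.SameCycle 0 M := (hmemF M).1 (F.max'_mem hFne)
  have hw : α.SameCycle 0 (α⁻¹ M) := by
    rw [← Equiv.Perm.sameCycle_apply_right, Equiv.Perm.apply_inv_self]
    exact hMF
  rcases eq_or_ne (α⁻¹ M) 0 with h | h
  · have hα0 : α 0 = M := by rw [← h, Equiv.Perm.apply_inv_self]
    rw [hα0]
    exact F.le_max' y ((hmemF y).2 hy)
  · exfalso
    have hlt := d1 hsA hw h
    rw [Equiv.Perm.apply_inv_self] at hlt
    exact absurd (F.le_max' _ ((hmemF _).2 hw)) (not_le.2 hlt)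

/-- In a star permutation, arrows in the orbit of 0 never jump over orbit elements. -/
lemma d2 (hsA : StarAsc α) {y z : Fin (n + 1)} (hy : α.SameCycle 0 y) (hy0 : y ≠ 0)
    (hz : α.SameCycle 0 z) (h1 : α y < z) (h2 : z < y) : False := by
  classical
  set S := Finset.univ.filter (fun w => α.SameCycle 0 w ∧ z ≤ w) with hS
  have hmemS : ∀ w, w ∈ S ↔ α.SameCycle 0 w ∧ z ≤ w := fun w => by simp [hS]
  have hyS : y ∈ S := (hmemS y).2 ⟨hy, le_of_lt h2⟩
  have hzS : z ∈ S := (hmemS z).2 ⟨hz, le_refl z⟩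
  have hz0 : z ≠ 0 := by
    intro h
    rw [h] at h1
    exact absurd h1 (Fin.not_lt_zero _)
  have hMS : α 0 ∈ S := (hmemS _).2 ⟨sc_step α 0, e1 hsA hz⟩
  have hαyS : α y ∉ S := fun h => absurd ((hmemS _).1 h).2 (not_le.2 h1)
  set T := insert (α y) (S.erase (α 0)) with hT
  have hcardT : S.card ≤ T.card := by
    rw [hT, Finset.card_insert_of_notMem (fun h => hαyS (Finset.mem_of_mem_erase h)),
      Finset.card_erase_of_mem hMS]
    have : 0 < S.card := Finset.card_pos.2 ⟨z, hzS⟩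
    omega
  have hmap : ∀ w (_ : w ∈ T), α⁻¹ w ∈ S := by
    intro w hw
    rcases Finset.mem_insert.1 hw with rfl | hw
    · rw [Equiv.Perm.inv_apply_self]
      exact hyS
    · have hwS := Finset.mem_of_mem_erase hw
      have hwM : w ≠ α 0 := Finset.ne_of_mem_erase hw
      obtain ⟨hw0, hwz⟩ := (hmemS w).1 hwS
      have hw' : α.SameCycle 0 (α⁻¹ w) := by
        rw [← Equiv.Perm.sameCycle_apply_right, Equiv.Perm.apply_inv_self]
        exact hw0
      have hne0 : α⁻¹ w ≠ 0 := fun h => hwM (by rw [← h, Equiv.Perm.apply_inv_self])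
      have hlt := d1 hsA hw' hne0
      rw [Equiv.Perm.apply_inv_self] at hlt
      exact (hmemS _).2 ⟨hw', le_trans hwz (le_of_lt hlt)⟩
  obtain ⟨a, haT, hza⟩ := Finset.surj_on_of_inj_on_of_card_le (fun w _ => α⁻¹ w) hmap
    (fun a₁ a₂ _ _ h => by simpa using h) hcardT z hzS
  have ha : a = α z := by
    have := congrArg α hza
    rw [Equiv.Perm.apply_inv_self] at this
    exact this.symm
  subst ha
  rcases Finset.mem_insert.1 haT with h | h
  · exact absurd (α.injective h) (ne_of_lt h2)
  · have hzz := ((hmemS _).1 (Finset.mem_of_mem_erase h)).2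
    have := d1 hsA hz hz0
    exact absurd hzz (not_le.2 this)

end OrderFacts

section InsSome

variable {n : ℕ} {α : Perm (Fin (n + 1))} {j' : Fin (n + 1)}

lemma x0_ne_zero (hne : α 0 ≠ j') : α⁻¹ j' ≠ 0 :=
  fun h => hne (by rw [← h, Equiv.Perm.apply_inv_self])

lemma beta_agree (hne : α 0 ≠ j') {z : Fin (n + 2)} (h0 : z ≠ 0)
    (hx : z ≠ (α⁻¹ j').castSucc) : insPerm α (some j') z = chainExt α z := by
  rw [insPerm, Equiv.Perm.mul_apply]
  apply Equiv.swap_apply_of_ne_of_ne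
  · intro h
    exact h0 ((chainExt α).injective (h.trans (chainExt_zero α).symm))
  · intro h
    apply hx
    have hx0 : chainExt α ((α⁻¹ j').castSucc) = j'.castSucc := by
      rw [chainExt_castSucc α (x0_ne_zero hne), Equiv.Perm.apply_inv_self]
    exact (chainExt α).injective (h.trans hx0.symm)

lemma m4a : (insPerm α (some j')).SameCycle 0 j'.castSucc := by
  have := sc_step (insPerm α (some j')) 0
  rwa [insPerm_some_zero] at this

lemma m4b (hne : α 0 ≠ j') :
    (insPerm α (some j')).SameCycle ((α⁻¹ j').castSucc) (Fin.last (n + 1)) := by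
  have := sc_step (insPerm α (some j')) ((α⁻¹ j').castSucc)
  rwa [insPerm_some_castSucc_eq α (x0_ne_zero hne) (Equiv.Perm.apply_inv_self α j')] at this

lemma sc_x0_j' : α.SameCycle j' (α⁻¹ j') := by
  have : α.SameCycle j' (α (α⁻¹ j')) := by
    rw [Equiv.Perm.apply_inv_self]
  exact Equiv.Perm.SameCycle.of_apply_right this

/-- Key merge fact for the bad case. -/
lemma bad_merge (hbad : ¬ α.SameCycle 0 j') :
    (insPerm α (some j')).SameCycle 0 ((α⁻¹ j').castSucc) := by
  have hne : α 0 ≠ j' := fun h => hbad (h ▸ sc_step α 0)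
  have h1 : (chainExt α).SameCycle j'.castSucc ((α⁻¹ j').castSucc) := (ce1 α).2 sc_x0_j'
  obtain ⟨s, hs, hsc⟩ := sc_walk (chainExt α) (insPerm α (some j'))
    {(α⁻¹ j').castSucc} h1 rfl (by
      intro z hz hzS
      have hzx : z ≠ (α⁻¹ j').castSucc := hzS
      have hz0 : z ≠ 0 := by
        rintro rfl
        rw [← cs_zero] at hz
        exact hbad ((ce1 α).1 hz).symm
      exact beta_agree hne hz0 hzx)
  rw [Set.mem_singleton_iff] at hs
  rw [hs] at hsc
  exact m4a.trans hsc

section Good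

variable (hne : α 0 ≠ j') (hg : α.SameCycle 0 j')
include hne hg

lemma sc_x0A : α.SameCycle 0 (α⁻¹ j') := hg.trans sc_x0_j'

lemma m3for {x y : Fin (n + 1)} (h0x : ¬ α.SameCycle 0 x) (hxy : α.SameCycle x y) :
    (insPerm α (some j')).SameCycle x.castSucc y.castSucc := by
  obtain ⟨s, hs, hsc⟩ := sc_walk (chainExt α) (insPerm α (some j'))
    {y.castSucc} ((ce1 α).2 hxy) rfl (by
      intro z hz hzS
      have hzl : z ≠ Fin.last (n + 1) := by
        rintro rfl
        exact h0x ((ce2 α).1 hz)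
      have hz0 : z ≠ 0 := by
        rintro rfl
        rw [← cs_zero] at hz
        exact h0x ((ce1 α).1 hz).symm
      have hzx : z ≠ (α⁻¹ j').castSucc := by
        rintro rfl
        exact h0x (((ce1 α).1 hz).trans (sc_x0A hne hg).symm).symm
      exact beta_agree hne hz0 hzx)
  rw [Set.mem_singleton_iff] at hs
  rwa [hs] at hsc

lemma m3back {x y : Fin (n + 1)} (h0x : ¬ α.SameCycle 0 x)
    (hxy : (insPerm α (some j')).SameCycle x.castSucc y.castSucc) : α.SameCycle x y := by
  obtain ⟨s, hs, hsc⟩ := sc_walk (insPerm α (some j')) (chainExt α)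
    {y.castSucc, 0, (α⁻¹ j').castSucc} hxy (by left; rfl) (by
      intro z _ hzS
      simp only [Set.mem_insert_iff, Set.mem_singleton_iff, not_or] at hzS
      exact (beta_agree hne hzS.2.1 hzS.2.2).symm)
  simp only [Set.mem_insert_iff, Set.mem_singleton_iff] at hs
  rcases hs with rfl | rfl | rfl
  · exact (ce1 α).1 hsc
  · rw [← cs_zero] at hsc
    exact absurd ((ce1 α).1 hsc).symm h0x
  · exact absurd (((ce1 α).1 hsc).trans (sc_x0A hne hg).symm).symm h0x

lemma m3b {x : Fin (n + 1)} (h0x : ¬ α.SameCycle 0 x) :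
    ¬ (insPerm α (some j')).SameCycle x.castSucc 0 := by
  intro hxy
  obtain ⟨s, hs, hsc⟩ := sc_walk (insPerm α (some j')) (chainExt α)
    {0, (α⁻¹ j').castSucc} hxy (by left; rfl) (by
      intro z _ hzS
      simp only [Set.mem_insert_iff, Set.mem_singleton_iff, not_or] at hzS
      exact (beta_agree hne hzS.1 hzS.2).symm)
  simp only [Set.mem_insert_iff, Set.mem_singleton_iff] at hs
  rcases hs with rfl | rfl
  · rw [← cs_zero] at hsc
    exact absurd ((ce1 α).1 hsc).symm h0x
  · exact absurd (((ce1 α).1 hsc).trans (sc_x0A hne hg).symm).symm h0x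

lemma m3c {x : Fin (n + 1)} (h0x : ¬ α.SameCycle 0 x) :
    ¬ (insPerm α (some j')).SameCycle x.castSucc (Fin.last (n + 1)) := by
  intro hxy
  obtain ⟨s, hs, hsc⟩ := sc_walk (insPerm α (some j')) (chainExt α)
    {Fin.last (n + 1), 0, (α⁻¹ j').castSucc} hxy (by left; rfl) (by
      intro z _ hzS
      simp only [Set.mem_insert_iff, Set.mem_singleton_iff, not_or] at hzS
      exact (beta_agree hne hzS.2.1 hzS.2.2).symm)
  simp only [Set.mem_insert_iff, Set.mem_singleton_iff] at hs
  rcases hs with rfl | rfl | rfl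
  · exact absurd ((ce2 α).1 hsc) h0x
  · rw [← cs_zero] at hsc
    exact absurd ((ce1 α).1 hsc).symm h0x
  · exact absurd (((ce1 α).1 hsc).trans (sc_x0A hne hg).symm).symm h0x

lemma m5 {x : Fin (n + 1)} (hx : α.SameCycle 0 x) :
    (insPerm α (some j')).SameCycle x.castSucc 0 ∨
    (insPerm α (some j')).SameCycle x.castSucc (Fin.last (n + 1)) := by
  have hcz : (chainExt α).SameCycle x.castSucc (0 : Fin (n + 2)) := by
    have := chain_to_zero α hx
    rwa [cs_zero] at this
  obtain ⟨s, hs, hsc⟩ := sc_walk (chainExt α) (insPerm α (some j'))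
    {0, (α⁻¹ j').castSucc} hcz
    (by left; rfl) (by
      intro z _ hzS
      simp only [Set.mem_insert_iff, Set.mem_singleton_iff, not_or] at hzS
      exact beta_agree hne hzS.1 hzS.2)
  simp only [Set.mem_insert_iff, Set.mem_singleton_iff] at hs
  rcases hs with rfl | rfl
  · exact Or.inl hsc
  · exact Or.inr (hsc.trans (m4b hne))

end Good

end InsSome

section GoodStar

variable {n : ℕ} {α : Perm (Fin (n + 1))} {j' : Fin (n + 1)}
variable (hsA : StarAsc α) (hne : α 0 ≠ j') (hg : α.SameCycle 0 j')
include hsA hne hg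

/-- Positive walk: low elements of the orbit of 0 stay with 0. -/
lemma pw {y : Fin (n + 1)} (hy : α.SameCycle 0 y) (h0 : 0 < y) (hj : y ≤ j') :
    (insPerm α (some j')).SameCycle y.castSucc 0 := by
  have key : ∀ (N : ℕ) (y : Fin (n + 1)), y.val ≤ N → α.SameCycle 0 y → 0 < y → y ≤ j' →
      (insPerm α (some j')).SameCycle y.castSucc 0 := by
    intro N
    induction N with
    | zero =>
      intro y hN _ h0 _
      have : (0 : Fin (n + 1)).val < y.val := h0
      omega
    | succ N ih =>
      intro y hN hy h0 hj
      have hy0 : y ≠ 0 := Fin.pos_iff_ne_zero.1 h0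
      have hd := d1 hsA hy hy0
      have hαyj : α y ≠ j' := ne_of_lt (lt_of_lt_of_le hd hj)
      have hstep : (insPerm α (some j')).SameCycle y.castSucc ((α y).castSucc) := by
        have := sc_step (insPerm α (some j')) y.castSucc
        rwa [insPerm_some_castSucc α hy0 hαyj] at this
      rcases eq_or_ne (α y) 0 with h | h
      · rw [h, cs_zero] at hstep
        exact hstep
      · have hyv : (α y).val < y.val := hd
        have ihy : (insPerm α (some j')).SameCycle ((α y).castSucc) 0 :=
          ih (α y) (by omega) (hy.trans (sc_step α y)) (Fin.pos_iff_ne_zero.2 h)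
            (le_trans (le_of_lt hd) hj)
        exact hstep.trans ihy
  exact key y.val y (le_refl _) hy h0 hj

/-- Mirror walk: high elements of the orbit of 0 go with the new top element. -/
lemma mw {y : Fin (n + 1)} (hy : α.SameCycle 0 y) (hj : j' < y) :
    (insPerm α (some j')).SameCycle y.castSucc (Fin.last (n + 1)) := by
  have key : ∀ (N : ℕ) (y : Fin (n + 1)), y.val ≤ N → α.SameCycle 0 y → j' < y →
      (insPerm α (some j')).SameCycle y.castSucc (Fin.last (n + 1)) := by
    intro N
    induction N with
    | zero =>
      intro y hN h0y hj'
      have : j'.val < y.val := hj'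
      omega
    | succ N ih =>
      intro y hN hy hj'
      have hy0 : y ≠ 0 := by
        intro h
        rw [h] at hj'
        exact absurd hj' (Fin.not_lt_zero _)
      have hd := d1 hsA hy hy0
      rcases eq_or_ne (α y) j' with h | h
      · have := sc_step (insPerm α (some j')) y.castSucc
        rwa [insPerm_some_castSucc_eq α hy0 h] at this
      · have hjαy : j' < α y := by
          rcases lt_trichotomy (α y) j' with hlt | heq | hgt
          · exact (d2 hsA hy hy0 hg hlt hj').elim
          · exact absurd heq h
          · exact hgt
        have hstep : (insPerm α (some j')).SameCycle y.castSucc ((α y).castSucc) := by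
          have := sc_step (insPerm α (some j')) y.castSucc
          rwa [insPerm_some_castSucc α hy0 h] at this
        have hyv : (α y).val < y.val := hd
        exact hstep.trans (ih (α y) (by omega) (hy.trans (sc_step α y)) hjαy)
  exact key y.val y (le_refl _) hy hj

/-- The explicit partition of `Fin (n+2)` into the new orbits. -/
lemma rP_of_sc {u v : Fin (n + 2)} (h : (insPerm α (some j')).SameCycle u v) :
    ((u = 0 ∨ ∃ y, u = y.castSucc ∧ α.SameCycle 0 y ∧ 0 < y ∧ y ≤ j') ∧
     (v = 0 ∨ ∃ y, v = y.castSucc ∧ α.SameCycle 0 y ∧ 0 < y ∧ y ≤ j')) ∨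
    ((u = Fin.last (n + 1) ∨ ∃ y, u = y.castSucc ∧ α.SameCycle 0 y ∧ j' < y) ∧
     (v = Fin.last (n + 1) ∨ ∃ y, v = y.castSucc ∧ α.SameCycle 0 y ∧ j' < y)) ∨
    (∃ a b, u = a.castSucc ∧ v = b.castSucc ∧ ¬ α.SameCycle 0 a ∧ α.SameCycle a b) := by
  set β := insPerm α (some j') with hβ
  set B0 : Fin (n + 2) → Prop :=
    fun u => u = 0 ∨ ∃ y, u = y.castSucc ∧ α.SameCycle 0 y ∧ 0 < y ∧ y ≤ j' with hB0
  set BL : Fin (n + 2) → Prop :=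
    fun u => u = Fin.last (n + 1) ∨ ∃ y, u = y.castSucc ∧ α.SameCycle 0 y ∧ j' < y with hBL
  have hdis1 : ∀ u, B0 u → BL u → False := by
    rintro u (rfl | ⟨y, rfl, _, hy0, hyj⟩) h2
    · rcases h2 with h2 | ⟨y, hy, _, hjy⟩
      · exact last_ne_zero' h2.symm
      · rw [← cs_zero] at hy
        have hy' : (0 : Fin (n + 1)) = y := Fin.castSucc_injective _ hy
        rw [← hy'] at hjy
        exact absurd hjy (Fin.not_lt_zero _)
    · rcases h2 with h2 | ⟨y', hy', _, hjy'⟩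
      · exact cs_ne_last y h2
      · have hyy : y = y' := Fin.castSucc_injective _ hy'
        subst hyy
        exact absurd (lt_of_le_of_lt hyj hjy') (lt_irrefl y)
  have hdis2 : ∀ u a, B0 u → u = a.castSucc → ¬ α.SameCycle 0 a → False := by
    rintro u a hB h2 h3
    rcases hB with rfl | ⟨y, rfl, hy, _, _⟩
    · have ha0 : a = 0 := by
        apply Fin.castSucc_injective (n + 1)
        rw [cs_zero]
        exact h2.symm
      exact h3 (ha0 ▸ Equiv.Perm.SameCycle.refl _ _)
    · have hya : y = a := Fin.castSucc_injective _ h2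
      exact h3 (hya ▸ hy)
  have hdis3 : ∀ u a, BL u → u = a.castSucc → ¬ α.SameCycle 0 a → False := by
    rintro u a (rfl | ⟨y, rfl, hy, _⟩) h2 h3
    · exact cs_ne_last a h2.symm
    · have : y = a := Fin.castSucc_injective _ h2
      exact h3 (this ▸ hy)
  refine sc_ind β (fun u v => (B0 u ∧ B0 v) ∨ (BL u ∧ BL v) ∨
    (∃ a b, u = a.castSucc ∧ v = b.castSucc ∧ ¬ α.SameCycle 0 a ∧ α.SameCycle a b)) ?_ ?_ ?_ h
  · intro u
    induction u using Fin.lastCases with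
    | last => exact Or.inr (Or.inl ⟨Or.inl rfl, Or.inl rfl⟩)
    | cast a =>
      by_cases ha : α.SameCycle 0 a
      · rcases eq_or_ne a 0 with rfl | ha0
        · exact Or.inl ⟨Or.inl cs_zero, Or.inl cs_zero⟩
        · rcases le_or_gt a j' with haj | haj
          · exact Or.inl ⟨Or.inr ⟨a, rfl, ha, Fin.pos_iff_ne_zero.2 ha0, haj⟩,
              Or.inr ⟨a, rfl, ha, Fin.pos_iff_ne_zero.2 ha0, haj⟩⟩
          · exact Or.inr (Or.inl ⟨Or.inr ⟨a, rfl, ha, haj⟩, Or.inr ⟨a, rfl, ha, haj⟩⟩)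
      · exact Or.inr (Or.inr ⟨a, a, rfl, rfl, ha, Equiv.Perm.SameCycle.refl _ _⟩)
  · rintro u v w h1 h2
    rcases h1 with ⟨hu, hv⟩ | ⟨hu, hv⟩ | ⟨a, b, rfl, rfl, ha, hab⟩
    · rcases h2 with ⟨hv', hw⟩ | ⟨hv', hw⟩ | ⟨a', b', hv', rfl, ha', hab'⟩
      · exact Or.inl ⟨hu, hw⟩
      · exact (hdis1 v hv hv').elim
      · exact (hdis2 v a' hv hv' ha').elim
    · rcases h2 with ⟨hv', hw⟩ | ⟨hv', hw⟩ | ⟨a', b', hv', rfl, ha', hab'⟩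
      · exact (hdis1 v hv' hv).elim
      · exact Or.inr (Or.inl ⟨hu, hw⟩)
      · exact (hdis3 v a' hv hv' ha').elim
    · have hb : ¬ α.SameCycle 0 b := fun hc => ha (hc.trans hab.symm)
      rcases h2 with ⟨hv', hw⟩ | ⟨hv', hw⟩ | ⟨a', b', hv', rfl, ha', hab'⟩
      · exact (hdis2 _ _ hv' rfl hb).elim
      · exact (hdis3 _ _ hv' rfl hb).elim
      · have hba : b = a' := Fin.castSucc_injective _ hv'
        subst hba
        exact Or.inr (Or.inr ⟨a, b', rfl, rfl, ha, hab.trans hab'⟩)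
  · intro u
    induction u using Fin.lastCases with
    | last =>
      rw [hβ, insPerm_some_last α hne]
      refine Or.inr (Or.inl ⟨Or.inl rfl, Or.inr ⟨α 0, rfl, sc_step α 0, ?_⟩⟩)
      exact lt_of_le_of_ne (e1 hsA hg) (fun h => hne h.symm)
    | cast a =>
      by_cases ha : α.SameCycle 0 a
      · rcases eq_or_ne a 0 with rfl | ha0
        · rw [hβ, cs_zero, insPerm_some_zero]
          rcases eq_or_ne j' 0 with rfl | hj0
          · exact Or.inl ⟨Or.inl rfl, Or.inl cs_zero⟩
          · exact Or.inl ⟨Or.inl rfl, Or.inr ⟨j', rfl, hg, Fin.pos_iff_ne_zero.2 hj0, le_refl _⟩⟩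
        · have hd := d1 hsA ha ha0
          rcases le_or_gt a j' with haj | haj
          · -- low block
            have hαaj : α a ≠ j' := ne_of_lt (lt_of_lt_of_le hd haj)
            rw [hβ, insPerm_some_castSucc α ha0 hαaj]
            refine Or.inl ⟨Or.inr ⟨a, rfl, ha, Fin.pos_iff_ne_zero.2 ha0, haj⟩, ?_⟩
            rcases eq_or_ne (α a) 0 with h0 | h0
            · exact Or.inl (by rw [h0, cs_zero])
            · exact Or.inr ⟨α a, rfl, ha.trans (sc_step α a), Fin.pos_iff_ne_zero.2 h0,
                le_trans (le_of_lt hd) haj⟩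
          · -- high block
            rcases eq_or_ne (α a) j' with hj | hj
            · rw [hβ, insPerm_some_castSucc_eq α ha0 hj]
              exact Or.inr (Or.inl ⟨Or.inr ⟨a, rfl, ha, haj⟩, Or.inl rfl⟩)
            · have hjαa : j' < α a := by
                rcases lt_trichotomy (α a) j' with hlt | heq | hgt
                · exact (d2 hsA ha ha0 hg hlt haj).elim
                · exact absurd heq hj
                · exact hgt
              rw [hβ, insPerm_some_castSucc α ha0 hj]
              exact Or.inr (Or.inl ⟨Or.inr ⟨a, rfl, ha, haj⟩,
                Or.inr ⟨α a, rfl, ha.trans (sc_step α a), hjαa⟩⟩)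
      · have ha0 : a ≠ 0 := fun h => ha (h ▸ Equiv.Perm.SameCycle.refl _ _)
        have hαaj : α a ≠ j' := fun h => ha (hg.trans (h ▸ sc_step α a).symm).symm.symm
        rw [hβ, insPerm_some_castSucc α ha0 hαaj]
        exact Or.inr (Or.inr ⟨a, α a, rfl, rfl, ha, sc_step α a⟩)

lemma m1 {z : Fin (n + 2)} :
    (insPerm α (some j')).SameCycle 0 z ↔
      z = 0 ∨ ∃ y, z = y.castSucc ∧ α.SameCycle 0 y ∧ 0 < y ∧ y ≤ j' := by
  constructor
  · intro h
    rcases rP_of_sc hsA hne hg h with ⟨_, hv⟩ | ⟨hu, _⟩ | ⟨a, b, hu, _, ha, _⟩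
    · exact hv
    · rcases hu with hu | ⟨y, hy, _, hyj⟩
      · exact absurd hu.symm last_ne_zero'
      · rw [← cs_zero] at hy
        have : (0 : Fin (n + 1)) = y := Fin.castSucc_injective _ hy
        rw [← this] at hyj
        exact absurd hyj (Fin.not_lt_zero _)
    · rw [← cs_zero] at hu
      have : (0 : Fin (n + 1)) = a := Fin.castSucc_injective _ hu
      exact absurd (this ▸ Equiv.Perm.SameCycle.refl α 0) ha
  · rintro (rfl | ⟨y, rfl, hy, h0, hj⟩)
    · exact Equiv.Perm.SameCycle.refl _ _
    · exact (pw hsA hne hg hy h0 hj).symm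

lemma m2 {z : Fin (n + 2)} :
    (insPerm α (some j')).SameCycle (Fin.last (n + 1)) z ↔
      z = Fin.last (n + 1) ∨ ∃ y, z = y.castSucc ∧ α.SameCycle 0 y ∧ j' < y := by
  constructor
  · intro h
    rcases rP_of_sc hsA hne hg h with ⟨hu, _⟩ | ⟨_, hv⟩ | ⟨a, b, hu, _, _, _⟩
    · rcases hu with hu | ⟨y, hy, _, _⟩
      · exact absurd hu last_ne_zero'
      · exact absurd hy.symm (cs_ne_last _)
    · exact hv
    · exact absurd hu.symm (cs_ne_last _)
  · rintro (rfl | ⟨y, rfl, hy, hj⟩)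
    · exact Equiv.Perm.SameCycle.refl _ _
    · exact (mw hsA hne hg hy hj).symm

end GoodStar

section C2Main

variable {n : ℕ} {α : Perm (Fin (n + 1))} {j' : Fin (n + 1)}
variable (hsA : StarAsc α) (hne : α 0 ≠ j') (hg : α.SameCycle 0 j')
include hsA hne hg

lemma strip_O0 {z : Fin (n + 2)} (h : (insPerm α (some j')).SameCycle 0 z) :
    ∃ y, z = y.castSucc ∧ α.SameCycle 0 y := by
  rcases (m1 hsA hne hg).1 h with rfl | ⟨y, rfl, hy, _, _⟩
  · exact ⟨0, cs_zero.symm, Equiv.Perm.SameCycle.refl _ _⟩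
  · exact ⟨y, rfl, hy⟩

lemma strip_OB {x : Fin (n + 1)} (h0x : ¬ α.SameCycle 0 x) {z : Fin (n + 2)}
    (h : (insPerm α (some j')).SameCycle x.castSucc z) :
    ∃ w, z = w.castSucc ∧ α.SameCycle x w := by
  induction z using Fin.lastCases with
  | last => exact absurd h (m3c hne hg h0x)
  | cast w => exact ⟨w, rfl, m3back hne hg h0x h⟩

lemma x0_high : j' < α⁻¹ j' := by
  have h := d1 hsA (sc_x0A hne hg) (x0_ne_zero hne)
  rwa [Equiv.Perm.apply_inv_self] at h

lemma asc_classify {u : Fin (n + 2)} (hu : u < insPerm α (some j') u) :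
    u = 0 ∨ u = (α⁻¹ j').castSucc ∨
      ∃ x, u = x.castSucc ∧ ¬ α.SameCycle 0 x ∧ x < α x := by
  induction u using Fin.lastCases with
  | last =>
    rw [insPerm_some_last α hne] at hu
    exact absurd hu (not_lt.2 (Fin.le_last _))
  | cast x =>
    rcases eq_or_ne x 0 with rfl | hx0
    · exact Or.inl cs_zero
    rcases eq_or_ne (α x) j' with hαx | hαx
    · refine Or.inr (Or.inl ?_)
      congr 1
      rw [← hαx, Equiv.Perm.inv_apply_self]
    · rw [insPerm_some_castSucc α hx0 hαx] at hu
      have hasc : x < α x := Fin.castSucc_lt_castSucc_iff.1 hu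
      refine Or.inr (Or.inr ⟨x, rfl, ?_, hasc⟩)
      intro hsc
      exact absurd hasc (not_lt.2 (le_of_lt (d1 hsA hsc hx0)))

lemma star'_main_asc : StarAsc (insPerm α (some j')) := by
  intro u v huv hu hv
  have hx0cs0 : (α⁻¹ j').castSucc ≠ 0 := cs_ne_zero (x0_ne_zero hne)
  rcases asc_classify hsA hne hg hu with rfl | rfl | ⟨x, rfl, h0x, hx⟩ <;>
    rcases asc_classify hsA hne hg hv with rfl | rfl | ⟨y, rfl, h0y, hy⟩
  · rfl
  · -- 0 and x₀: contradiction via m1 and x0_high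
    exfalso
    rcases (m1 hsA hne hg).1 huv with h | ⟨y, hyeq, _, _, hyj⟩
    · exact hx0cs0 h
    · have : α⁻¹ j' = y := Fin.castSucc_injective _ hyeq
      exact absurd (this ▸ hyj) (not_le.2 (x0_high hsA hne hg))
  · exact absurd huv.symm (m3b hne hg h0y)
  · exfalso
    rcases (m1 hsA hne hg).1 huv.symm with h | ⟨y, hyeq, _, _, hyj⟩
    · exact hx0cs0 h
    · have : α⁻¹ j' = y := Fin.castSucc_injective _ hyeq
      exact absurd (this ▸ hyj) (not_le.2 (x0_high hsA hne hg))
  · rfl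
  · exact absurd ((huv.symm).trans (m4b hne)) (m3c hne hg h0y)
  · exact absurd huv (m3b hne hg h0x)
  · exact absurd (huv.trans (m4b hne)) (m3c hne hg h0x)
  · have hxy : α.SameCycle x y := m3back hne hg h0x huv
    rw [hsA x y hxy hx hy]

lemma star'_main_cross (hsC : StarCross α) : StarCross (insPerm α (some j')) := by
  set β := insPerm α (some j') with hβ
  -- canonical representatives
  have reps : ∀ u : Fin (n + 2),
      β.SameCycle u 0 ∨ β.SameCycle u (Fin.last (n + 1)) ∨
      ∃ x, u = x.castSucc ∧ ¬ α.SameCycle 0 x := by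
    intro u
    induction u using Fin.lastCases with
    | last => exact Or.inr (Or.inl (Equiv.Perm.SameCycle.refl _ _))
    | cast x =>
      by_cases hx : α.SameCycle 0 x
      · rcases m5 hne hg hx with h | h
        · exact Or.inl h
        · exact Or.inr (Or.inl h)
      · exact Or.inr (Or.inr ⟨x, rfl, hx⟩)
  intro u v hnuv hcross
  -- replace u, v by representative-based crossing
  obtain ⟨a, b, c, d, hab, hbc, hcd, ha, hc, hb, hd⟩ := hcross
  -- helper: crossing for (0, last)
  have cross0L : ∀ a b c d : Fin (n + 2), a < b → b < c → c < d →
      β.SameCycle 0 a → β.SameCycle 0 c → β.SameCycle (Fin.last (n + 1)) b →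
      β.SameCycle (Fin.last (n + 1)) d → False := by
    intro a b c d hab hbc hcd ha hc hb hd
    obtain ⟨y, rfl, _⟩ := strip_O0 hsA hne hg ha
    rcases (m1 hsA hne hg).1 hc with rfl | ⟨w, rfl, _, _, hwj⟩
    · exact absurd (lt_trans hab hbc) (not_lt.2 (Fin.zero_le _))
    · rcases (m2 hsA hne hg).1 hb with rfl | ⟨p, rfl, _, hjp⟩
      · exact absurd (lt_trans hbc hcd) (not_lt.2 (Fin.le_last _))
      · have : p < w := Fin.castSucc_lt_castSucc_iff.1 hbc
        exact absurd (lt_trans hjp this) (not_lt.2 hwj)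
  have crossL0 : ∀ a b c d : Fin (n + 2), a < b → b < c → c < d →
      β.SameCycle (Fin.last (n + 1)) a → β.SameCycle (Fin.last (n + 1)) c →
      β.SameCycle 0 b → β.SameCycle 0 d → False := by
    intro a b c d hab hbc hcd ha hc hb hd
    rcases (m2 hsA hne hg).1 hc with rfl | ⟨w, rfl, _, hjw⟩
    · exact absurd hcd (not_lt.2 (Fin.le_last _))
    · rcases (m1 hsA hne hg).1 hd with rfl | ⟨p, rfl, _, _, hpj⟩
      · exact absurd (lt_trans hbc hcd) (not_lt.2 (Fin.zero_le _))
      · have : w < p := Fin.castSucc_lt_castSucc_iff.1 hcd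
        exact absurd (lt_trans hjw this) (not_lt.2 hpj)
  -- crossing of O0 with outside orbit
  have cross0B : ∀ (x : Fin (n + 1)), ¬ α.SameCycle 0 x →
      ∀ a b c d : Fin (n + 2), a < b → b < c → c < d →
      β.SameCycle 0 a → β.SameCycle 0 c → β.SameCycle x.castSucc b →
      β.SameCycle x.castSucc d → False := by
    intro x h0x a b c d hab hbc hcd ha hc hb hd
    obtain ⟨a₀, rfl, ha₀⟩ := strip_O0 hsA hne hg ha
    obtain ⟨c₀, rfl, hc₀⟩ := strip_O0 hsA hne hg hc
    obtain ⟨b₀, rfl, hb₀⟩ := strip_OB hsA hne hg h0x hb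
    obtain ⟨d₀, rfl, hd₀⟩ := strip_OB hsA hne hg h0x hd
    exact hsC 0 x h0x ⟨a₀, b₀, c₀, d₀, Fin.castSucc_lt_castSucc_iff.1 hab,
      Fin.castSucc_lt_castSucc_iff.1 hbc, Fin.castSucc_lt_castSucc_iff.1 hcd,
      ha₀, hc₀, hb₀, hd₀⟩
  have crossB0 : ∀ (x : Fin (n + 1)), ¬ α.SameCycle 0 x →
      ∀ a b c d : Fin (n + 2), a < b → b < c → c < d →
      β.SameCycle x.castSucc a → β.SameCycle x.castSucc c → β.SameCycle 0 b →
      β.SameCycle 0 d → False := by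
    intro x h0x a b c d hab hbc hcd ha hc hb hd
    obtain ⟨a₀, rfl, ha₀⟩ := strip_OB hsA hne hg h0x ha
    obtain ⟨c₀, rfl, hc₀⟩ := strip_OB hsA hne hg h0x hc
    obtain ⟨b₀, rfl, hb₀⟩ := strip_O0 hsA hne hg hb
    obtain ⟨d₀, rfl, hd₀⟩ := strip_O0 hsA hne hg hd
    exact hsC x 0 (fun h => h0x h.symm) ⟨a₀, b₀, c₀, d₀, Fin.castSucc_lt_castSucc_iff.1 hab,
      Fin.castSucc_lt_castSucc_iff.1 hbc, Fin.castSucc_lt_castSucc_iff.1 hcd,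
      ha₀, hc₀, hb₀, hd₀⟩
  have crossLB : ∀ (x : Fin (n + 1)), ¬ α.SameCycle 0 x →
      ∀ a b c d : Fin (n + 2), a < b → b < c → c < d →
      β.SameCycle (Fin.last (n + 1)) a → β.SameCycle (Fin.last (n + 1)) c →
      β.SameCycle x.castSucc b → β.SameCycle x.castSucc d → False := by
    intro x h0x a b c d hab hbc hcd ha hc hb hd
    rcases (m2 hsA hne hg).1 hc with rfl | ⟨c₀, rfl, hc₀, _⟩
    · exact absurd hcd (not_lt.2 (Fin.le_last _))
    rcases (m2 hsA hne hg).1 ha with rfl | ⟨a₀, rfl, ha₀, _⟩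
    · exact absurd (lt_trans hab hbc) (not_lt.2 (Fin.le_last _))
    obtain ⟨b₀, rfl, hb₀⟩ := strip_OB hsA hne hg h0x hb
    obtain ⟨d₀, rfl, hd₀⟩ := strip_OB hsA hne hg h0x hd
    exact hsC 0 x h0x ⟨a₀, b₀, c₀, d₀, Fin.castSucc_lt_castSucc_iff.1 hab,
      Fin.castSucc_lt_castSucc_iff.1 hbc, Fin.castSucc_lt_castSucc_iff.1 hcd,
      ha₀, hc₀, hb₀, hd₀⟩
  have crossBL : ∀ (x : Fin (n + 1)), ¬ α.SameCycle 0 x →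
      ∀ a b c d : Fin (n + 2), a < b → b < c → c < d →
      β.SameCycle x.castSucc a → β.SameCycle x.castSucc c →
      β.SameCycle (Fin.last (n + 1)) b → β.SameCycle (Fin.last (n + 1)) d → False := by
    intro x h0x a b c d hab hbc hcd ha hc hb hd
    obtain ⟨a₀, rfl, ha₀⟩ := strip_OB hsA hne hg h0x ha
    obtain ⟨c₀, rfl, hc₀⟩ := strip_OB hsA hne hg h0x hc
    rcases (m2 hsA hne hg).1 hb with rfl | ⟨b₀, rfl, hb₀, _⟩
    · exact absurd hbc (not_lt.2 (Fin.le_last _))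
    rcases (m2 hsA hne hg).1 hd with hd' | ⟨d₀, rfl, hd₀, _⟩
    · -- d = last : use the anchor 0
      have ha₀0 : a₀ ≠ 0 := by
        rintro rfl
        exact h0x ha₀.symm
      exact hsC 0 x h0x ⟨0, a₀, b₀, c₀, Fin.pos_iff_ne_zero.2 ha₀0,
        Fin.castSucc_lt_castSucc_iff.1 hab, Fin.castSucc_lt_castSucc_iff.1 hbc,
        Equiv.Perm.SameCycle.refl _ _, hb₀, ha₀, hc₀⟩
    · exact hsC x 0 (fun h => h0x h.symm) ⟨a₀, b₀, c₀, d₀, Fin.castSucc_lt_castSucc_iff.1 hab,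
        Fin.castSucc_lt_castSucc_iff.1 hbc, Fin.castSucc_lt_castSucc_iff.1 hcd,
        ha₀, hc₀, hb₀, hd₀⟩
  have crossBB : ∀ (x y : Fin (n + 1)), ¬ α.SameCycle 0 x → ¬ α.SameCycle 0 y →
      ¬ α.SameCycle x y →
      ∀ a b c d : Fin (n + 2), a < b → b < c → c < d →
      β.SameCycle x.castSucc a → β.SameCycle x.castSucc c →
      β.SameCycle y.castSucc b → β.SameCycle y.castSucc d → False := by
    intro x y h0x h0y hxy a b c d hab hbc hcd ha hc hb hd
    obtain ⟨a₀, rfl, ha₀⟩ := strip_OB hsA hne hg h0x ha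
    obtain ⟨c₀, rfl, hc₀⟩ := strip_OB hsA hne hg h0x hc
    obtain ⟨b₀, rfl, hb₀⟩ := strip_OB hsA hne hg h0y hb
    obtain ⟨d₀, rfl, hd₀⟩ := strip_OB hsA hne hg h0y hd
    exact hsC x y hxy ⟨a₀, b₀, c₀, d₀, Fin.castSucc_lt_castSucc_iff.1 hab,
      Fin.castSucc_lt_castSucc_iff.1 hbc, Fin.castSucc_lt_castSucc_iff.1 hcd,
      ha₀, hc₀, hb₀, hd₀⟩
  -- now do the case analysis on representatives of u and v
  rcases reps u with hu | hu | ⟨x, rfl, h0x⟩ <;> rcases reps v with hv | hv | ⟨y, hveq, h0y⟩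
  · exact hnuv ((hu.trans hv.symm))
  · exact cross0L a b c d hab hbc hcd (hu.symm.trans ha) (hu.symm.trans hc)
      (hv.symm.trans hb) (hv.symm.trans hd)
  · subst hveq
    exact cross0B y h0y a b c d hab hbc hcd (hu.symm.trans ha) (hu.symm.trans hc) hb hd
  · exact crossL0 a b c d hab hbc hcd (hu.symm.trans ha) (hu.symm.trans hc)
      (hv.symm.trans hb) (hv.symm.trans hd)
  · exact hnuv ((hu.trans hv.symm))
  · subst hveq
    exact crossLB y h0y a b c d hab hbc hcd (hu.symm.trans ha) (hu.symm.trans hc) hb hd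
  · exact crossB0 x h0x a b c d hab hbc hcd ha hc (hv.symm.trans hb) (hv.symm.trans hd)
  · exact crossBL x h0x a b c d hab hbc hcd ha hc (hv.symm.trans hb) (hv.symm.trans hd)
  · subst hveq
    have hxy : ¬ α.SameCycle x y := fun h => hnuv (m3for hne hg h0x h)
    exact crossBB x y h0x h0y hxy a b c d hab hbc hcd ha hc hb hd

end C2Main

section LiftChain

variable {n : ℕ} {α : Perm (Fin (n + 1))}

lemma sc_lift_strip {x : Fin (n + 1)} {z : Fin (n + 2)}
    (h : (liftPerm α).SameCycle x.castSucc z) : ∃ w, z = w.castSucc ∧ α.SameCycle x w := by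
  induction z using Fin.lastCases with
  | last => exact absurd (sc_fixed (liftPerm_last α) h.symm) (cs_ne_last x)
  | cast w => exact ⟨w, rfl, (sc_lift_iff α).1 h⟩

lemma star'_lift_iff : Star' (liftPerm α) ↔ Star' α := by
  constructor
  · rintro ⟨hA, hC⟩
    constructor
    · intro x y hxy hx hy
      have h1 : x.castSucc < liftPerm α x.castSucc := by
        rw [liftPerm_castSucc]; exact Fin.castSucc_lt_castSucc_iff.2 hx
      have h2 : y.castSucc < liftPerm α y.castSucc := by
        rw [liftPerm_castSucc]; exact Fin.castSucc_lt_castSucc_iff.2 hy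
      exact Fin.castSucc_injective _ (hA _ _ ((sc_lift_iff α).2 hxy) h1 h2)
    · intro x y hxy ⟨a, b, c, d, hab, hbc, hcd, ha, hc, hb, hd⟩
      refine hC x.castSucc y.castSucc (fun h => hxy ((sc_lift_iff α).1 h))
        ⟨a.castSucc, b.castSucc, c.castSucc, d.castSucc,
          Fin.castSucc_lt_castSucc_iff.2 hab, Fin.castSucc_lt_castSucc_iff.2 hbc,
          Fin.castSucc_lt_castSucc_iff.2 hcd,
          (sc_lift_iff α).2 ha, (sc_lift_iff α).2 hc, (sc_lift_iff α).2 hb,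
          (sc_lift_iff α).2 hd⟩
  · rintro ⟨hA, hC⟩
    constructor
    · intro u v huv hu hv
      induction u using Fin.lastCases with
      | last => exact absurd hu (by rw [liftPerm_last]; exact not_lt.2 (Fin.le_last _))
      | cast x =>
        induction v using Fin.lastCases with
        | last => exact absurd hv (by rw [liftPerm_last]; exact not_lt.2 (Fin.le_last _))
        | cast y =>
          rw [liftPerm_castSucc] at hu hv
          congr 1
          exact hA x y ((sc_lift_iff α).1 huv) (Fin.castSucc_lt_castSucc_iff.1 hu)
            (Fin.castSucc_lt_castSucc_iff.1 hv)
    · intro u v huv ⟨a, b, c, d, hab, hbc, hcd, ha, hc, hb, hd⟩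
      induction u using Fin.lastCases with
      | last =>
        have ha' := sc_fixed (liftPerm_last α) ha
        rw [ha'] at hab
        exact absurd hab (not_lt.2 (Fin.le_last _))
      | cast x =>
        induction v using Fin.lastCases with
        | last =>
          have hb' := sc_fixed (liftPerm_last α) hb
          have hd' := sc_fixed (liftPerm_last α) hd
          rw [hb'] at hbc
          exact absurd hbc (not_lt.2 (Fin.le_last _))
        | cast y =>
          obtain ⟨a₀, rfl, ha₀⟩ := sc_lift_strip ha
          obtain ⟨c₀, rfl, hc₀⟩ := sc_lift_strip hc
          obtain ⟨b₀, rfl, hb₀⟩ := sc_lift_strip hb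
          obtain ⟨d₀, rfl, hd₀⟩ := sc_lift_strip hd
          exact hC x y (fun h => huv ((sc_lift_iff α).2 h))
            ⟨a₀, b₀, c₀, d₀, Fin.castSucc_lt_castSucc_iff.1 hab,
              Fin.castSucc_lt_castSucc_iff.1 hbc, Fin.castSucc_lt_castSucc_iff.1 hcd,
              ha₀, hc₀, hb₀, hd₀⟩

lemma chain_strip {x : Fin (n + 1)} (h0x : ¬ α.SameCycle 0 x) {z : Fin (n + 2)}
    (h : (chainExt α).SameCycle x.castSucc z) : ∃ w, z = w.castSucc ∧ α.SameCycle x w := by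
  induction z using Fin.lastCases with
  | last => exact absurd ((ce2 α).1 h) h0x
  | cast w => exact ⟨w, rfl, (ce1 α).1 h⟩

lemma chain_stripL {z : Fin (n + 2)} (h : (chainExt α).SameCycle (Fin.last (n + 1)) z) :
    z = Fin.last (n + 1) ∨ ∃ w, z = w.castSucc ∧ α.SameCycle 0 w :=
  chain_last_classify α h

/-- C2, none case. -/
lemma star'_chain (hs : Star' α) : Star' (chainExt α) := by
  obtain ⟨hA, hC⟩ := hs
  constructor
  · intro u v huv hu hv
    -- classify ascents
    have classify : ∀ w : Fin (n + 2), w < chainExt α w →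
        w = 0 ∨ ∃ x, w = x.castSucc ∧ ¬ α.SameCycle 0 x ∧ x < α x := by
      intro w hw
      induction w using Fin.lastCases with
      | last => exact absurd hw (by rw [chainExt_last]; exact not_lt.2 (Fin.le_last _))
      | cast x =>
        rcases eq_or_ne x 0 with rfl | hx0
        · exact Or.inl cs_zero
        · rw [chainExt_castSucc α hx0] at hw
          have hasc := Fin.castSucc_lt_castSucc_iff.1 hw
          refine Or.inr ⟨x, rfl, fun hsc => ?_, hasc⟩
          exact absurd hasc (not_lt.2 (le_of_lt (d1 hA hsc hx0)))
    rcases classify u hu with rfl | ⟨x, rfl, h0x, hx⟩ <;>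
      rcases classify v hv with rfl | ⟨y, rfl, h0y, hy⟩
    · rfl
    · rw [← cs_zero] at huv
      exact absurd ((ce1 α).1 huv) h0y
    · rw [← cs_zero] at huv
      exact absurd ((ce1 α).1 huv).symm h0x
    · congr 1
      exact hA x y ((ce1 α).1 huv) hx hy
  · intro u v hnuv hcross
    obtain ⟨a, b, c, d, hab, hbc, hcd, ha, hc, hb, hd⟩ := hcross
    have reps : ∀ u : Fin (n + 2),
        (chainExt α).SameCycle u (Fin.last (n + 1)) ∨
        ∃ x, u = x.castSucc ∧ ¬ α.SameCycle 0 x := by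
      intro u
      induction u using Fin.lastCases with
      | last => exact Or.inl (Equiv.Perm.SameCycle.refl _ _)
      | cast x =>
        by_cases hx : α.SameCycle 0 x
        · exact Or.inl ((ce2 α).2 hx)
        · exact Or.inr ⟨x, rfl, hx⟩
    have crossLB : ∀ (x : Fin (n + 1)), ¬ α.SameCycle 0 x →
        ∀ a b c d : Fin (n + 2), a < b → b < c → c < d →
        (chainExt α).SameCycle (Fin.last (n + 1)) a →
        (chainExt α).SameCycle (Fin.last (n + 1)) c →
        (chainExt α).SameCycle x.castSucc b → (chainExt α).SameCycle x.castSucc d → False := by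
      intro x h0x a b c d hab hbc hcd ha hc hb hd
      rcases chain_stripL hc with rfl | ⟨c₀, rfl, hc₀⟩
      · exact absurd hcd (not_lt.2 (Fin.le_last _))
      rcases chain_stripL ha with rfl | ⟨a₀, rfl, ha₀⟩
      · exact absurd (lt_trans hab hbc) (not_lt.2 (Fin.le_last _))
      obtain ⟨b₀, rfl, hb₀⟩ := chain_strip h0x hb
      obtain ⟨d₀, rfl, hd₀⟩ := chain_strip h0x hd
      exact hC 0 x h0x ⟨a₀, b₀, c₀, d₀, Fin.castSucc_lt_castSucc_iff.1 hab,
        Fin.castSucc_lt_castSucc_iff.1 hbc, Fin.castSucc_lt_castSucc_iff.1 hcd,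
        ha₀, hc₀, hb₀, hd₀⟩
    have crossBL : ∀ (x : Fin (n + 1)), ¬ α.SameCycle 0 x →
        ∀ a b c d : Fin (n + 2), a < b → b < c → c < d →
        (chainExt α).SameCycle x.castSucc a → (chainExt α).SameCycle x.castSucc c →
        (chainExt α).SameCycle (Fin.last (n + 1)) b →
        (chainExt α).SameCycle (Fin.last (n + 1)) d → False := by
      intro x h0x a b c d hab hbc hcd ha hc hb hd
      obtain ⟨a₀, rfl, ha₀⟩ := chain_strip h0x ha
      obtain ⟨c₀, rfl, hc₀⟩ := chain_strip h0x hc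
      rcases chain_stripL hb with rfl | ⟨b₀, rfl, hb₀⟩
      · exact absurd hbc (not_lt.2 (Fin.le_last _))
      rcases chain_stripL hd with rfl | ⟨d₀, rfl, hd₀⟩
      · -- d = last: anchor 0
        have ha₀0 : a₀ ≠ 0 := by
          rintro rfl
          exact h0x ha₀.symm
        exact hC 0 x h0x ⟨0, a₀, b₀, c₀, Fin.pos_iff_ne_zero.2 ha₀0,
          Fin.castSucc_lt_castSucc_iff.1 hab, Fin.castSucc_lt_castSucc_iff.1 hbc,
          Equiv.Perm.SameCycle.refl _ _, hb₀, ha₀, hc₀⟩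
      · exact hC x 0 (fun h => h0x h.symm) ⟨a₀, b₀, c₀, d₀,
          Fin.castSucc_lt_castSucc_iff.1 hab, Fin.castSucc_lt_castSucc_iff.1 hbc,
          Fin.castSucc_lt_castSucc_iff.1 hcd, ha₀, hc₀, hb₀, hd₀⟩
    rcases reps u with hu | ⟨x, rfl, h0x⟩ <;> rcases reps v with hv | ⟨y, hveq, h0y⟩
    · exact hnuv (hu.trans hv.symm)
    · subst hveq
      exact crossLB y h0y a b c d hab hbc hcd (hu.symm.trans ha) (hu.symm.trans hc) hb hd
    · exact crossBL x h0x a b c d hab hbc hcd ha hc (hv.symm.trans hb) (hv.symm.trans hd)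
    · subst hveq
      have hxy : ¬ α.SameCycle x y := fun h => hnuv ((ce1 α).2 h)
      obtain ⟨a₀, rfl, ha₀⟩ := chain_strip h0x ha
      obtain ⟨c₀, rfl, hc₀⟩ := chain_strip h0x hc
      obtain ⟨b₀, rfl, hb₀⟩ := chain_strip h0y hb
      obtain ⟨d₀, rfl, hd₀⟩ := chain_strip h0y hd
      exact hC x y hxy ⟨a₀, b₀, c₀, d₀, Fin.castSucc_lt_castSucc_iff.1 hab,
        Fin.castSucc_lt_castSucc_iff.1 hbc, Fin.castSucc_lt_castSucc_iff.1 hcd,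
        ha₀, hc₀, hb₀, hd₀⟩

/-- C1b, none case. -/
lemma star'_chain_rev (hs : Star' (chainExt α)) : Star' α := by
  obtain ⟨hA, hC⟩ := hs
  constructor
  · intro x y hxy hx hy
    -- lift ascents into the chain
    have hup : ∀ w : Fin (n + 1), w < α w →
        ∃ u : Fin (n + 2), (chainExt α).SameCycle w.castSucc u ∧ u < chainExt α u ∧
          (u = w.castSucc ∨ (u = 0 ∧ w = 0)) := by
      intro w hw
      rcases eq_or_ne w 0 with rfl | hw0
      · refine ⟨0, by rw [cs_zero], ?_, Or.inr ⟨rfl, rfl⟩⟩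
        rw [chainExt_zero]
        exact Fin.pos_iff_ne_zero.2 last_ne_zero'
      · refine ⟨w.castSucc, Equiv.Perm.SameCycle.refl _ _, ?_, Or.inl rfl⟩
        rw [chainExt_castSucc α hw0]
        exact Fin.castSucc_lt_castSucc_iff.2 hw
    obtain ⟨u, hscu, huasc, hucase⟩ := hup x hx
    obtain ⟨v, hscv, hvasc, hvcase⟩ := hup y hy
    have hsc : (chainExt α).SameCycle u v :=
      (hscu.symm.trans ((ce1 α).2 hxy)).trans hscv
    have heq := hA u v hsc huasc hvasc
    rcases hucase with rfl | ⟨rfl, rfl⟩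
    · rcases hvcase with rfl | ⟨rfl, rfl⟩
      · exact Fin.castSucc_injective _ heq
      · rw [← cs_zero] at heq
        exact Fin.castSucc_injective _ heq
    · rcases hvcase with rfl | ⟨rfl, rfl⟩
      · rw [← cs_zero] at heq
        exact (Fin.castSucc_injective _ heq.symm).symm
      · rfl
  · intro x y hxy hcross
    obtain ⟨a, b, c, d, hab, hbc, hcd, ha, hc, hb, hd⟩ := hcross
    by_cases h0x : α.SameCycle 0 x <;> by_cases h0y : α.SameCycle 0 y
    · exact hxy (h0x.symm.trans h0y)
    · -- x in orbit of 0 : use last as representative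
      have hnl : ¬ (chainExt α).SameCycle (Fin.last (n + 1)) y.castSucc :=
        fun h => h0y ((ce2 α).1 h.symm)
      refine hC _ _ hnl ⟨a.castSucc, b.castSucc, c.castSucc, d.castSucc,
        Fin.castSucc_lt_castSucc_iff.2 hab, Fin.castSucc_lt_castSucc_iff.2 hbc,
        Fin.castSucc_lt_castSucc_iff.2 hcd, ?_, ?_, ?_, ?_⟩
      · exact ((ce2 α).2 (h0x.trans ha)).symm
      · exact ((ce2 α).2 (h0x.trans hc)).symm
      · exact (ce1 α).2 hb
      · exact (ce1 α).2 hd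
    · have hnl : ¬ (chainExt α).SameCycle x.castSucc (Fin.last (n + 1)) :=
        fun h => h0x ((ce2 α).1 h)
      refine hC _ _ hnl ⟨a.castSucc, b.castSucc, c.castSucc, d.castSucc,
        Fin.castSucc_lt_castSucc_iff.2 hab, Fin.castSucc_lt_castSucc_iff.2 hbc,
        Fin.castSucc_lt_castSucc_iff.2 hcd, ?_, ?_, ?_, ?_⟩
      · exact (ce1 α).2 ha
      · exact (ce1 α).2 hc
      · exact ((ce2 α).2 (h0y.trans hb)).symm
      · exact ((ce2 α).2 (h0y.trans hd)).symm
    · have hn : ¬ (chainExt α).SameCycle x.castSucc y.castSucc :=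
        fun h => hxy ((ce1 α).1 h)
      exact hC _ _ hn ⟨a.castSucc, b.castSucc, c.castSucc, d.castSucc,
        Fin.castSucc_lt_castSucc_iff.2 hab, Fin.castSucc_lt_castSucc_iff.2 hbc,
        Fin.castSucc_lt_castSucc_iff.2 hcd, (ce1 α).2 ha, (ce1 α).2 hc,
        (ce1 α).2 hb, (ce1 α).2 hd⟩

/-- C1a: the bad case destroys the star property. -/
lemma star'_bad {j' : Fin (n + 1)} (hbad : ¬ α.SameCycle 0 j') :
    ¬ Star' (insPerm α (some j')) := by
  rintro ⟨hA, _⟩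
  have hne : α 0 ≠ j' := fun h => hbad (h ▸ sc_step α 0)
  have hj0 : j' ≠ 0 := fun h => hbad (h ▸ Equiv.Perm.SameCycle.refl _ _)
  have h1 : (insPerm α (some j')).SameCycle 0 ((α⁻¹ j').castSucc) := bad_merge hbad
  have asc0 : (0 : Fin (n + 2)) < insPerm α (some j') 0 := by
    rw [insPerm_some_zero]
    exact Fin.pos_iff_ne_zero.2 (cs_ne_zero hj0)
  have ascx : (α⁻¹ j').castSucc < insPerm α (some j') ((α⁻¹ j').castSucc) := by
    rw [insPerm_some_castSucc_eq α (x0_ne_zero hne) (Equiv.Perm.apply_inv_self α j')]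
    exact Fin.castSucc_lt_last _
  exact cs_ne_zero (x0_ne_zero hne) (hA _ _ h1 asc0 ascx).symm

end LiftChain

section C1bMain

variable {n : ℕ} {α : Perm (Fin (n + 1))} {j' : Fin (n + 1)}
variable (hne : α 0 ≠ j') (hg : α.SameCycle 0 j')
include hne hg

/-- C1b, main case: star of the extension implies star of the base. -/
lemma star'_main_rev (hs : Star' (insPerm α (some j'))) : Star' α := by
  obtain ⟨hA, hC⟩ := hs
  set β := insPerm α (some j') with hβ
  -- no element of the orbit of 0 other than 0 itself is an ascent
  have noasc : ∀ w : Fin (n + 1), α.SameCycle 0 w → w ≠ 0 → ¬ (w < α w) := by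
    intro w h0w hw0 hasc
    by_cases hαw : α w = j'
    · -- w = α⁻¹ j' and the ascent jumps into j'
      have hwx0 : w = α⁻¹ j' := by rw [← hαw, Equiv.Perm.inv_apply_self]
      have hj0 : j' ≠ 0 := by
        intro h
        rw [h] at hαw
        rw [hαw] at hasc
        exact absurd hasc (Fin.not_lt_zero _)
      have ascw : w.castSucc < β w.castSucc := by
        rw [hβ, insPerm_some_castSucc_eq α hw0 hαw]
        exact Fin.castSucc_lt_last _
      have asc0 : (0 : Fin (n + 2)) < β 0 := by
        rw [hβ, insPerm_some_zero]
        exact Fin.pos_iff_ne_zero.2 (cs_ne_zero hj0)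
      have hwlast : β.SameCycle w.castSucc (Fin.last (n + 1)) := by
        rw [hwx0]; exact m4b hne
      by_cases hscl : β.SameCycle 0 (Fin.last (n + 1))
      · -- two ascents in one cycle
        have h1 : β.SameCycle 0 w.castSucc := hscl.trans hwlast.symm
        exact cs_ne_zero hw0 (hA 0 w.castSucc h1 asc0 ascw).symm
      · -- crossing between the two new cycles
        refine hC 0 (Fin.last (n + 1)) hscl
          ⟨0, w.castSucc, j'.castSucc, Fin.last (n + 1),
            Fin.pos_iff_ne_zero.2 (cs_ne_zero hw0), ?_, Fin.castSucc_lt_last _,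
            Equiv.Perm.SameCycle.refl _ _, m4a, hwlast.symm, Equiv.Perm.SameCycle.refl _ _⟩
        rw [← hαw]
        exact Fin.castSucc_lt_castSucc_iff.2 hasc
    · have ascw : w.castSucc < β w.castSucc := by
        rw [hβ, insPerm_some_castSucc α hw0 hαw]
        exact Fin.castSucc_lt_castSucc_iff.2 hasc
      rcases m5 hne hg h0w with hc0 | hcl
      · by_cases hj0 : j' = 0
        · -- 0 is a fixed point of β
          have hfix : β 0 = 0 := by
            rw [hβ, insPerm_some_zero, hj0, cs_zero]
          exact cs_ne_zero hw0 (sc_fixed hfix hc0.symm)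
        · have asc0 : (0 : Fin (n + 2)) < β 0 := by
            rw [hβ, insPerm_some_zero]
            exact Fin.pos_iff_ne_zero.2 (cs_ne_zero hj0)
          exact cs_ne_zero hw0 (hA w.castSucc 0 hc0 ascw asc0)
      · have ascx0 : (α⁻¹ j').castSucc < β ((α⁻¹ j').castSucc) := by
          rw [hβ, insPerm_some_castSucc_eq α (x0_ne_zero hne) (Equiv.Perm.apply_inv_self α j')]
          exact Fin.castSucc_lt_last _
        have h2 : β.SameCycle w.castSucc ((α⁻¹ j').castSucc) := hcl.trans (m4b hne).symm
        have := hA w.castSucc ((α⁻¹ j').castSucc) h2 ascw ascx0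
        have hwx0 : w = α⁻¹ j' := Fin.castSucc_injective _ this
        exact hαw (by rw [hwx0, Equiv.Perm.apply_inv_self])
  constructor
  · intro x y hxy hx hy
    by_cases h0x : α.SameCycle 0 x
    · have h0y : α.SameCycle 0 y := h0x.trans hxy
      have hx0 : x = 0 := by
        by_contra h
        exact noasc x h0x h hx
      have hy0 : y = 0 := by
        by_contra h
        exact noasc y h0y h hy
      rw [hx0, hy0]
    · have h0y : ¬ α.SameCycle 0 y := fun h => h0x (h.trans hxy.symm)
      have hαxj : α x ≠ j' := fun h => h0x (hg.trans (h ▸ sc_step α x).symm)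
      have hαyj : α y ≠ j' := fun h => h0y (hg.trans (h ▸ sc_step α y).symm)
      have hx0 : x ≠ 0 := fun h => h0x (h ▸ Equiv.Perm.SameCycle.refl _ _)
      have hy0 : y ≠ 0 := fun h => h0y (h ▸ Equiv.Perm.SameCycle.refl _ _)
      have ascx : x.castSucc < β x.castSucc := by
        rw [hβ, insPerm_some_castSucc α hx0 hαxj]
        exact Fin.castSucc_lt_castSucc_iff.2 hx
      have ascy : y.castSucc < β y.castSucc := by
        rw [hβ, insPerm_some_castSucc α hy0 hαyj]
        exact Fin.castSucc_lt_castSucc_iff.2 hy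
      exact Fin.castSucc_injective _
        (hA _ _ (m3for hne hg h0x hxy) ascx ascy)
  · intro x y hxy hcross
    obtain ⟨a, b, c, d, hab, hbc, hcd, ha, hc, hb, hd⟩ := hcross
    by_cases h0x : α.SameCycle 0 x <;> by_cases h0y : α.SameCycle 0 y
    · exact hxy (h0x.symm.trans h0y)
    · -- a, c in orbit of 0; b, d in orbit of y (outside)
      have hsb := m3for hne hg h0y hb
      have hsd := m3for hne hg h0y hd
      rcases m5 hne hg (h0x.trans ha) with ha' | ha' <;>
        rcases m5 hne hg (h0x.trans hc) with hc' | hc'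
      · exact hC 0 y.castSucc (fun h => (m3b hne hg h0y) h.symm)
          ⟨a.castSucc, b.castSucc, c.castSucc, d.castSucc,
            Fin.castSucc_lt_castSucc_iff.2 hab, Fin.castSucc_lt_castSucc_iff.2 hbc,
            Fin.castSucc_lt_castSucc_iff.2 hcd, ha'.symm, hc'.symm, hsb, hsd⟩
      · -- a with 0, c with last : pattern (b, c, d, last) for (y, last)
        exact hC y.castSucc (Fin.last (n + 1)) (m3c hne hg h0y)
          ⟨b.castSucc, c.castSucc, d.castSucc, Fin.last (n + 1),
            Fin.castSucc_lt_castSucc_iff.2 hbc, Fin.castSucc_lt_castSucc_iff.2 hcd,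
            Fin.castSucc_lt_last _, hsb, hsd, hc'.symm, Equiv.Perm.SameCycle.refl _ _⟩
      · -- a with last, c with 0 : pattern (0, b, c, d) for (0, y)
        have hb0 : b ≠ 0 := by
          rintro rfl
          exact h0y hb.symm
        exact hC 0 y.castSucc (fun h => (m3b hne hg h0y) h.symm)
          ⟨0, b.castSucc, c.castSucc, d.castSucc,
            Fin.pos_iff_ne_zero.2 (cs_ne_zero hb0), Fin.castSucc_lt_castSucc_iff.2 hbc,
            Fin.castSucc_lt_castSucc_iff.2 hcd, Equiv.Perm.SameCycle.refl _ _,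
            hc'.symm, hsb, hsd⟩
      · exact hC (Fin.last (n + 1)) y.castSucc
          (fun h => (m3c hne hg h0y) h.symm)
          ⟨a.castSucc, b.castSucc, c.castSucc, d.castSucc,
            Fin.castSucc_lt_castSucc_iff.2 hab, Fin.castSucc_lt_castSucc_iff.2 hbc,
            Fin.castSucc_lt_castSucc_iff.2 hcd, ha'.symm, hc'.symm, hsb, hsd⟩
    · -- b, d in orbit of 0; a, c outside (orbit of x)
      have hsa := m3for hne hg h0x ha
      have hsc' := m3for hne hg h0x hc
      rcases m5 hne hg (h0y.trans hb) with hb' | hb' <;>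
        rcases m5 hne hg (h0y.trans hd) with hd' | hd'
      · exact hC x.castSucc 0 (m3b hne hg h0x)
          ⟨a.castSucc, b.castSucc, c.castSucc, d.castSucc,
            Fin.castSucc_lt_castSucc_iff.2 hab, Fin.castSucc_lt_castSucc_iff.2 hbc,
            Fin.castSucc_lt_castSucc_iff.2 hcd, hsa, hsc', hb'.symm, hd'.symm⟩
      · -- b with 0, d with last: (0, a, b, c) for (0, x)
        have ha0 : a ≠ 0 := by
          rintro rfl
          exact h0x ha.symm
        exact hC 0 x.castSucc (fun h => (m3b hne hg h0x) h.symm)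
          ⟨0, a.castSucc, b.castSucc, c.castSucc,
            Fin.pos_iff_ne_zero.2 (cs_ne_zero ha0), Fin.castSucc_lt_castSucc_iff.2 hab,
            Fin.castSucc_lt_castSucc_iff.2 hbc, Equiv.Perm.SameCycle.refl _ _,
            hb'.symm, hsa, hsc'⟩
      · -- b with last, d with 0: (a, b, c, last) for (x, last)
        exact hC x.castSucc (Fin.last (n + 1)) (m3c hne hg h0x)
          ⟨a.castSucc, b.castSucc, c.castSucc, Fin.last (n + 1),
            Fin.castSucc_lt_castSucc_iff.2 hab, Fin.castSucc_lt_castSucc_iff.2 hbc,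
            Fin.castSucc_lt_last _, hsa, hsc', hb'.symm, Equiv.Perm.SameCycle.refl _ _⟩
      · exact hC x.castSucc (Fin.last (n + 1)) (m3c hne hg h0x)
          ⟨a.castSucc, b.castSucc, c.castSucc, d.castSucc,
            Fin.castSucc_lt_castSucc_iff.2 hab, Fin.castSucc_lt_castSucc_iff.2 hbc,
            Fin.castSucc_lt_castSucc_iff.2 hcd, hsa, hsc', hb'.symm, hd'.symm⟩
    · have hn : ¬ β.SameCycle x.castSucc y.castSucc :=
        fun h => hxy (m3back hne hg h0x h)
      exact hC _ _ hn ⟨a.castSucc, b.castSucc, c.castSucc, d.castSucc,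
        Fin.castSucc_lt_castSucc_iff.2 hab, Fin.castSucc_lt_castSucc_iff.2 hbc,
        Fin.castSucc_lt_castSucc_iff.2 hcd, m3for hne hg h0x ha, m3for hne hg h0x hc,
        m3for hne hg h0y hb, m3for hne hg h0y hd⟩

end C1bMain

section Master

variable {n : ℕ}

lemma star'_ins_iff (α : Perm (Fin (n + 1))) (j : Option (Fin (n + 1)))
    (hgood : j = none ∨ ∃ j', j = some j' ∧ α.SameCycle 0 j') :
    Star' (insPerm α j) ↔ Star' α := by
  rcases hgood with rfl | ⟨j', rfl, hg⟩
  · exact ⟨star'_chain_rev, star'_chain⟩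
  · by_cases hne : α 0 = j'
    · rw [← hne, insPerm_some_apply_eq]
      exact star'_lift_iff
    · exact ⟨star'_main_rev hne hg,
        fun hs => ⟨star'_main_asc hs.1 hne hg, star'_main_cross hs.1 hne hg hs.2⟩⟩

/-- Inverse of `liftPerm` for permutations fixing the top element. -/
def downPerm (γ : Perm (Fin (n + 2))) (h : γ (Fin.last (n + 1)) = Fin.last (n + 1)) :
    Perm (Fin (n + 1)) where
  toFun x := (γ x.castSucc).castPred (by
    intro hc
    exact cs_ne_last x (γ.injective (hc.trans h.symm)))
  invFun x := (γ⁻¹ x.castSucc).castPred (by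
    intro hc
    have : x.castSucc = γ (Fin.last (n + 1)) := by
      rw [← hc, Equiv.Perm.apply_inv_self]
    exact cs_ne_last x (this.trans h)
    )
  left_inv x := by
    apply Fin.castSucc_injective (n + 1)
    simp [Fin.castSucc_castPred]
  right_inv x := by
    apply Fin.castSucc_injective (n + 1)
    simp [Fin.castSucc_castPred]

lemma liftPerm_downPerm (γ : Perm (Fin (n + 2)))
    (h : γ (Fin.last (n + 1)) = Fin.last (n + 1)) : liftPerm (downPerm γ h) = γ := by
  apply Equiv.ext
  intro z
  induction z using Fin.lastCases with
  | last => rw [liftPerm_last, h]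
  | cast x =>
    rw [liftPerm_castSucc]
    simp [downPerm, Fin.castSucc_castPred]

lemma insPerm_surj (β : Perm (Fin (n + 2))) :
    ∃ (α : Perm (Fin (n + 1))) (j : Option (Fin (n + 1))), insPerm α j = β := by
  by_cases h : β 0 = Fin.last (n + 1)
  · set γ := β * Equiv.swap 0 (Fin.last (n + 1)) with hγdef
    have hγ : γ (Fin.last (n + 1)) = Fin.last (n + 1) := by
      rw [hγdef, Equiv.Perm.mul_apply, Equiv.swap_apply_right, h]
    refine ⟨downPerm γ hγ, none, ?_⟩
    show chainExt _ = β
    rw [chainExt, liftPerm_downPerm, hγdef, mul_assoc, Equiv.swap_mul_self, mul_one]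
  · set j' := (β 0).castPred h with hj'def
    have hcs : j'.castSucc = β 0 := Fin.castSucc_castPred _ _
    set γ := Equiv.swap (Fin.last (n + 1)) j'.castSucc * β * Equiv.swap 0 (Fin.last (n + 1))
      with hγdef
    have hγ : γ (Fin.last (n + 1)) = Fin.last (n + 1) := by
      rw [hγdef, Equiv.Perm.mul_apply, Equiv.Perm.mul_apply, Equiv.swap_apply_right, hcs,
        Equiv.swap_apply_right]
    refine ⟨downPerm γ hγ, some j', ?_⟩
    show Equiv.swap (Fin.last (n + 1)) j'.castSucc * chainExt _ = β
    rw [chainExt, liftPerm_downPerm, hγdef]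
    rw [mul_assoc (Equiv.swap (Fin.last (n + 1)) j'.castSucc * β) _ _, Equiv.swap_mul_self,
      mul_one, ← mul_assoc, Equiv.swap_mul_self, one_mul]

lemma perm_fin_one_eq_one (α : Perm (Fin 1)) : α = 1 :=
  Equiv.ext fun x => Subsingleton.elim _ _

end Master

section Assembly

lemma d_bound (d : ∀ n : ℕ, Equiv.Perm (Fin (n + 1)) → ℤ)
    (hbase : d 0 1 = 2)
    (hup : ∀ (n : ℕ) (α : Equiv.Perm (Fin (n + 1))) (j : Option (Fin (n + 1))),
      (j = none ∨ ∃ j', j = some j' ∧ α.SameCycle 0 j') →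
      d (n + 1) (insPerm α j) = d n α + 1)
    (hdown : ∀ (n : ℕ) (α : Equiv.Perm (Fin (n + 1))) (j : Option (Fin (n + 1))),
      ¬ (j = none ∨ ∃ j', j = some j' ∧ α.SameCycle 0 j') →
      d (n + 1) (insPerm α j) = d n α - 1) :
    ∀ (n : ℕ) (α : Equiv.Perm (Fin (n + 1))), d n α ≤ (n : ℤ) + 2 := by
  intro n
  induction n with
  | zero =>
    intro α
    rw [perm_fin_one_eq_one α, hbase]
    norm_num
  | succ n ih =>
    intro β
    obtain ⟨α, j, rfl⟩ := insPerm_surj β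
    by_cases hgood : j = none ∨ ∃ j', j = some j' ∧ α.SameCycle 0 j'
    · rw [hup n α j hgood]
      have := ih α
      push_cast
      omega
    · rw [hdown n α j hgood]
      have := ih α
      push_cast
      omega

end Assembly

end StarProof

/-- With the degree `d` defined recursively over the cut-and-reconnect tower (`d` of the
unique permutation of `S_1` is `2`; `d([α,j]) = d(α)+1` if `j = 0` (`none`) or `j` is
in the cycle of `α` containing the distinguished element `0`; `d([α,j]) = d(α)-1`
otherwise), a permutation `α ∈ S_{n+1}` attains the maximal degree `(n+1)+1` iff it
satisfies condition (*). -/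


theorem degree_max_iff_star (d : ∀ n : ℕ, Equiv.Perm (Fin (n + 1)) → ℤ)
    (hbase : d 0 1 = 2)
    (hup : ∀ (n : ℕ) (α : Equiv.Perm (Fin (n + 1))) (j : Option (Fin (n + 1))),
      (j = none ∨ ∃ j', j = some j' ∧ α.SameCycle 0 j') →
      d (n + 1) (insPerm α j) = d n α + 1)
    (hdown : ∀ (n : ℕ) (α : Equiv.Perm (Fin (n + 1))) (j : Option (Fin (n + 1))),
      ¬ (j = none ∨ ∃ j', j = some j' ∧ α.SameCycle 0 j') →
      d (n + 1) (insPerm α j) = d n α - 1) :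
    ∀ (n : ℕ) (α : Equiv.Perm (Fin (n + 1))),
      SatisfiesStar α ↔ d n α = (n : ℤ) + 2 := by
  intro n
  induction n with
  | zero =>
    intro α
    rw [StarProof.perm_fin_one_eq_one α]
    have h1 : SatisfiesStar (1 : Equiv.Perm (Fin 1)) :=
      (StarProof.satisfiesStar_iff 1).2 StarProof.star'_one
    have h2 : d 0 1 = (0 : ℤ) + 2 := by rw [hbase]; norm_num
    exact iff_of_true h1 h2
  | succ n ih =>
    intro β
    obtain ⟨α, j, rfl⟩ := StarProof.insPerm_surj β
    by_cases hgood : j = none ∨ ∃ j', j = some j' ∧ α.SameCycle 0 j'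
    · rw [hup n α j hgood, StarProof.satisfiesStar_iff,
        StarProof.star'_ins_iff α j hgood, ← StarProof.satisfiesStar_iff, ih α]
      push_cast
      omega
    · have hbadstar : ¬ SatisfiesStar (insPerm α j) := by
        cases j with
        | none => exact absurd (Or.inl rfl) hgood
        | some j' =>
          have hbad : ¬ α.SameCycle 0 j' := fun h => hgood (Or.inr ⟨j', rfl, h⟩)
          rw [StarProof.satisfiesStar_iff]
          exact StarProof.star'_bad hbad
      have hd := hdown n α j hgood
      have hb := StarProof.d_bound d hbase hup hdown n α
      apply iff_of_false hbadstar
      rw [hd]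
      push_cast at hb ⊢
      omega
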